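/- arXiv:2302.01364 — 4 statements merged into one kernel-verified Lean document; each statement's English description precedes it below -/
import Mathlib

section
/- Let A be an n×n real matrix that is Metzler (all off-diagonal entries nonnegative) and Hurwitz (every eigenvalue of A, regarded as a complex matrix, has strictly negative real part). Then for every ξ > 0 the matrix exp(−ξA) − I is invertible, every entry of Θ(ξ) = (exp(−ξA) − I)^{−1} is nonnegative, and every diagonal entry of Θ(ξ) is strictly positive. -/
open Matrix NormedSpace

/-- A square real matrix is Metzler if all its off-diagonal entries are nonnegative. -/
def IsMetzler {n : ℕ} (A : Matrix (Fin n) (Fin n) ℝ) : Prop :=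
  ∀ i j, i ≠ j → 0 ≤ A i j

/-- A square real matrix is Hurwitz if every eigenvalue of the matrix, viewed as a complex
matrix, has strictly negative real part. -/
def IsHurwitz {n : ℕ} (A : Matrix (Fin n) (Fin n) ℝ) : Prop :=
  ∀ μ ∈ spectrum ℂ (A.map ((↑) : ℝ → ℂ)), μ.re < 0



section Aux

variable {n : ℕ}

/-- entrywise HasSum for matrices -/
lemma hasSum_entry {R : Type*} [AddCommMonoid R] [TopologicalSpace R] [ContinuousAdd R]
    {f : ℕ → Matrix (Fin n) (Fin n) R} {a : Matrix (Fin n) (Fin n) R}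
    (hf : HasSum f a) (i j : Fin n) : HasSum (fun k => f k i j) (a i j) :=
  hf.map (Matrix.entryAddMonoidHom R i j) (continuous_id.matrix_elem i j)

lemma exp_entry_hasSum (X : Matrix (Fin n) (Fin n) ℝ) (i j : Fin n) :
    HasSum (fun k : ℕ => ((k.factorial : ℝ))⁻¹ * (X ^ k) i j) (exp X i j) := by
  letI : SeminormedRing (Matrix (Fin n) (Fin n) ℝ) := Matrix.linftyOpSemiNormedRing
  letI : NormedRing (Matrix (Fin n) (Fin n) ℝ) := Matrix.linftyOpNormedRing
  letI : NormedAlgebra ℝ (Matrix (Fin n) (Fin n) ℝ) := Matrix.linftyOpNormedAlgebra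
  have h := exp_series_hasSum_exp' (𝕂 := ℝ) X
  have h2 := hasSum_entry h i j
  simp only [Matrix.smul_apply, smul_eq_mul] at h2
  exact h2

lemma pow_entry_nonneg {X : Matrix (Fin n) (Fin n) ℝ} (hX : ∀ i j, 0 ≤ X i j) :
    ∀ (k : ℕ) (i j : Fin n), 0 ≤ (X ^ k) i j := by
  intro k
  induction k with
  | zero => intro i j; simp [Matrix.one_apply]; positivity
  | succ m ih =>
    intro i j
    rw [pow_succ, Matrix.mul_apply]
    exact Finset.sum_nonneg fun l _ => mul_nonneg (ih i l) (hX l j)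

lemma exp_entries_of_metzler {X : Matrix (Fin n) (Fin n) ℝ} (hX : ∀ i j, i ≠ j → 0 ≤ X i j) :
    (∀ i j, 0 ≤ exp X i j) ∧ (∀ i, 0 < exp X i i) := by
  letI : SeminormedRing (Matrix (Fin n) (Fin n) ℝ) := Matrix.linftyOpSemiNormedRing
  letI : NormedRing (Matrix (Fin n) (Fin n) ℝ) := Matrix.linftyOpNormedRing
  letI : NormedAlgebra ℝ (Matrix (Fin n) (Fin n) ℝ) := Matrix.linftyOpNormedAlgebra
  set c : ℝ := ∑ i, |X i i| with hc
  have hcd : ∀ i, 0 ≤ X i i + c := by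
    intro i
    have h1 : |X i i| ≤ c := Finset.single_le_sum (f := fun i => |X i i|)
      (fun _ _ => abs_nonneg _) (Finset.mem_univ i)
    have := neg_abs_le (X i i)
    linarith
  set Y : Matrix (Fin n) (Fin n) ℝ := X + c • (1 : Matrix (Fin n) (Fin n) ℝ) with hY
  have hYnn : ∀ i j, 0 ≤ Y i j := by
    intro i j
    by_cases h : i = j
    · subst h
      simp only [hY, Matrix.add_apply, Matrix.smul_apply, Matrix.one_apply_eq, smul_eq_mul,
        mul_one]
      exact hcd i
    · simp only [hY, Matrix.add_apply, Matrix.smul_apply, Matrix.one_apply_ne h, smul_eq_mul,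
        mul_zero, add_zero]
      exact hX i j h
  have hXeq : X = (-c) • (1 : Matrix (Fin n) (Fin n) ℝ) + Y := by
    rw [hY]; module
  have hsmul1 : exp ((-c) • (1 : Matrix (Fin n) (Fin n) ℝ))
      = Real.exp (-c) • (1 : Matrix (Fin n) (Fin n) ℝ) := by
    have h1 : (-c) • (1 : Matrix (Fin n) (Fin n) ℝ)
        = algebraMap ℝ (Matrix (Fin n) (Fin n) ℝ) (-c) := (Algebra.algebraMap_eq_smul_one _).symm
    have := algebraMap_exp_comm (𝕂 := ℝ) (𝔸 := Matrix (Fin n) (Fin n) ℝ) (-c)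
    rw [← Real.exp_eq_exp_ℝ, Algebra.algebraMap_eq_smul_one] at this
    rw [h1]
    exact this.symm
  have hexpX : exp X = Real.exp (-c) • exp Y := by
    rw [hXeq, Matrix.exp_add_of_commute _ _ ((Commute.one_left Y).smul_left (-c)),
      hsmul1, smul_mul_assoc, one_mul]
  have hYent : ∀ i j, 0 ≤ exp Y i j := by
    intro i j
    have h := exp_entry_hasSum Y i j
    exact hasSum_le (fun k => mul_nonneg (by positivity) (pow_entry_nonneg hYnn k i j)) hasSum_zero h
  have hYdiag : ∀ i, (1 : ℝ) ≤ exp Y i i := by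
    intro i
    have h := exp_entry_hasSum Y i i
    have h0 := le_hasSum h 0 (fun k _ => mul_nonneg (by positivity) (pow_entry_nonneg hYnn k i i))
    simpa using h0
  constructor
  · intro i j
    rw [hexpX, Matrix.smul_apply, smul_eq_mul]
    exact mul_nonneg (Real.exp_nonneg _) (hYent i j)
  · intro i
    rw [hexpX, Matrix.smul_apply, smul_eq_mul]
    have := hYdiag i
    nlinarith [Real.exp_pos (-c)]

end Aux




section Aux2

variable {n : ℕ}

lemma mulVec_continuous (w : Fin n → ℂ) :
    Continuous (fun M : Matrix (Fin n) (Fin n) ℂ => M *ᵥ w) := by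
  apply continuous_pi
  intro i
  simp only [Matrix.mulVec, dotProduct]
  exact continuous_finset_sum _ fun j _ =>
    (continuous_id.matrix_elem i j).mul continuous_const

lemma summable_mulVec {A' : Matrix (Fin n) (Fin n) ℂ}
    (hH : ∀ μ ∈ spectrum ℂ A', μ.re < 0) {ξ : ℝ} (hξ : 0 < ξ) (v : Fin n → ℂ) :
    Summable (fun k : ℕ => (exp ((ξ : ℂ) • A')) ^ k *ᵥ v) := by
  letI : SeminormedRing (Matrix (Fin n) (Fin n) ℂ) := Matrix.linftyOpSemiNormedRing
  letI : NormedRing (Matrix (Fin n) (Fin n) ℂ) := Matrix.linftyOpNormedRing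
  letI : NormedAlgebra ℂ (Matrix (Fin n) (Fin n) ℂ) := Matrix.linftyOpNormedAlgebra
  let S : Submodule ℂ (Fin n → ℂ) :=
    { carrier := {w | Summable (fun k : ℕ => (exp ((ξ : ℂ) • A')) ^ k *ᵥ w)}
      add_mem' := fun ha hb => by
        simpa [Matrix.mulVec_add] using ha.add hb
      zero_mem' := by
        simp only [Set.mem_setOf_eq, Matrix.mulVec_zero]
        exact summable_zero
      smul_mem' := fun c w hw => by
        simpa [Matrix.mulVec_smul] using hw.const_smul c }
  have hle : (⊤ : Submodule ℂ (Fin n → ℂ)) ≤ S := by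
    rw [← Module.End.iSup_maxGenEigenspace_eq_top (Matrix.toLinAlgEquiv' A')]
    apply iSup_le
    intro μ w hw
    obtain ⟨m, hm⟩ := (Module.End.mem_maxGenEigenspace (Matrix.toLinAlgEquiv' A') μ w).mp hw
    set N : Matrix (Fin n) (Fin n) ℂ := A' - μ • 1 with hN
    have hfN : Matrix.toLinAlgEquiv' A' - μ • 1 = Matrix.toLinAlgEquiv' N := by
      rw [hN, map_sub, _root_.map_smul, _root_.map_one]
    have hNm : (N ^ m) *ᵥ w = 0 := by
      rw [hfN, ← map_pow] at hm
      rwa [Matrix.toLinAlgEquiv'_apply] at hm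
    by_cases hsp : μ ∈ spectrum ℂ A'
    · -- negative real part case
      have hre : μ.re < 0 := hH μ hsp
      -- key pointwise formula
      have hk : ∀ k : ℕ, (exp ((ξ : ℂ) • A')) ^ k *ᵥ w
          = ∑ p ∈ Finset.range m,
              (Complex.exp (((k * ξ : ℝ) : ℂ) * μ) *
                (((p.factorial : ℂ))⁻¹ * ((k * ξ : ℝ) : ℂ) ^ p)) • (N ^ p *ᵥ w) := by
        intro k
        set t : ℝ := k * ξ with ht
        have h1 : (exp ((ξ : ℂ) • A')) ^ k = exp ((t : ℂ) • A') := by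
          rw [← Matrix.exp_nsmul]
          congr 1
          rw [← Nat.cast_smul_eq_nsmul ℂ k, smul_smul]
          congr 1
          push_cast [ht]
          ring
        have h2 : (t : ℂ) • A' = ((t : ℂ) * μ) • (1 : Matrix (Fin n) (Fin n) ℂ)
            + (t : ℂ) • N := by
          rw [hN]; module
        have h3 : exp (((t : ℂ) * μ) • (1 : Matrix (Fin n) (Fin n) ℂ))
            = Complex.exp ((t : ℂ) * μ) • (1 : Matrix (Fin n) (Fin n) ℂ) := by
          have := algebraMap_exp_comm (𝕂 := ℂ) (𝔸 := Matrix (Fin n) (Fin n) ℂ) ((t : ℂ) * μ)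
          rw [← Complex.exp_eq_exp_ℂ, Algebra.algebraMap_eq_smul_one] at this
          rw [(Algebra.algebraMap_eq_smul_one ((t : ℂ) * μ)).symm]
          exact this.symm
        have hcomm : Commute (((t : ℂ) * μ) • (1 : Matrix (Fin n) (Fin n) ℂ)) ((t : ℂ) • N) :=
          ((Commute.one_left N).smul_left _).smul_right _
        have h4 : exp ((t : ℂ) • A')
            = Complex.exp ((t : ℂ) * μ) • exp ((t : ℂ) • N) := by
          rw [h2, Matrix.exp_add_of_commute _ _ hcomm, h3, smul_mul_assoc, one_mul]
        -- expansion of exp (t • N) *ᵥ w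
        have h5 : HasSum (fun p : ℕ => (((p.factorial : ℂ))⁻¹ * (t : ℂ) ^ p) • (N ^ p *ᵥ w))
            (exp ((t : ℂ) • N) *ᵥ w) := by
          have hs := exp_series_hasSum_exp' (𝕂 := ℂ) ((t : ℂ) • N)
          have hs2 := hs.map (Matrix.mulVec.addMonoidHomLeft w) (mulVec_continuous w)
          simp only [Function.comp_def, Matrix.mulVec.addMonoidHomLeft, AddMonoidHom.coe_mk,
            ZeroHom.coe_mk] at hs2
          convert hs2 using 1
          funext p
          rw [smul_pow, smul_smul, Matrix.smul_mulVec]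
          rfl
        have h6 : exp ((t : ℂ) • N) *ᵥ w
            = ∑ p ∈ Finset.range m, (((p.factorial : ℂ))⁻¹ * (t : ℂ) ^ p) • (N ^ p *ᵥ w) := by
          rw [← h5.tsum_eq]
          apply tsum_eq_sum
          intro p hp
          rw [Finset.mem_range, not_lt] at hp
          have : N ^ p *ᵥ w = 0 := by
            have hsplit : N ^ p = N ^ (p - m) * N ^ m := by
              rw [← pow_add]; congr 1; omega
            rw [hsplit, ← Matrix.mulVec_mulVec, hNm, Matrix.mulVec_zero]
          rw [this, smul_zero]
        rw [h1, h4, Matrix.smul_mulVec, h6, Finset.smul_sum]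
        congr 1 with p
        rw [smul_smul]
      -- summability of the explicit formula
      show Summable fun k : ℕ => (exp ((ξ : ℂ) • A')) ^ k *ᵥ w
      rw [show (fun k : ℕ => (exp ((ξ : ℂ) • A')) ^ k *ᵥ w) = _ from funext hk]
      apply summable_sum
      intro p hp
      apply Summable.smul_const
      set r : ℝ := Real.exp (ξ * μ.re) with hr
      have hr1 : ‖r‖ < 1 := by
        rw [Real.norm_eq_abs, abs_of_pos (Real.exp_pos _)]
        exact Real.exp_lt_one_iff.mpr (mul_neg_of_pos_of_neg hξ hre)
      have hsum0 : Summable (fun k : ℕ => ((p.factorial : ℝ))⁻¹ * ξ ^ p * ((k : ℝ) ^ p * r ^ k)) :=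
        (summable_pow_mul_geometric_of_norm_lt_one p hr1).mul_left _
      apply Summable.of_norm
      convert hsum0 using 1
      funext k
      have htk : (0 : ℝ) ≤ k * ξ := mul_nonneg (Nat.cast_nonneg k) hξ.le
      rw [norm_mul, norm_mul]
      rw [Complex.norm_exp]
      have h7 : (((k * ξ : ℝ) : ℂ) * μ).re = (k * ξ) * μ.re := by
        simp [Complex.ofReal_mul]
      rw [h7]
      rw [norm_pow, Complex.norm_real, Real.norm_eq_abs, abs_of_nonneg htk]
      rw [norm_inv, Complex.norm_natCast]
      have h8 : Real.exp (k * ξ * μ.re) = r ^ k := by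
        rw [hr, ← Real.exp_nat_mul]
        ring_nf
      rw [h8, mul_pow]
      ring
    · -- μ not in the spectrum : the generalized eigenspace is trivial
      have hu : IsUnit (algebraMap ℂ (Matrix (Fin n) (Fin n) ℂ) μ - A') :=
        spectrum.notMem_iff.mp hsp
      have hu2 : IsUnit N := by
        have := hu.neg
        rwa [neg_sub, Algebra.algebraMap_eq_smul_one, ← hN] at this
      obtain ⟨u, huu⟩ := hu2.pow m
      have hw0 : w = 0 := by
        have h1 : (↑u⁻¹ : Matrix (Fin n) (Fin n) ℂ) *ᵥ ((N ^ m) *ᵥ w) = w := by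
          rw [Matrix.mulVec_mulVec, ← huu, Units.inv_mul, Matrix.one_mulVec]
        rw [hNm, Matrix.mulVec_zero] at h1
        exact h1.symm
      rw [hw0]
      exact S.zero_mem
  exact hle Submodule.mem_top

end Aux2

section Aux3

variable {n : ℕ}

lemma map_exp_smul (A : Matrix (Fin n) (Fin n) ℝ) (ξ : ℝ) :
    (exp (ξ • A)).map (Complex.ofReal) = exp ((ξ : ℂ) • A.map Complex.ofReal) := by
  letI : SeminormedRing (Matrix (Fin n) (Fin n) ℝ) := Matrix.linftyOpSemiNormedRing
  letI : NormedRing (Matrix (Fin n) (Fin n) ℝ) := Matrix.linftyOpNormedRing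
  letI : NormedAlgebra ℝ (Matrix (Fin n) (Fin n) ℝ) := Matrix.linftyOpNormedAlgebra
  letI : SeminormedRing (Matrix (Fin n) (Fin n) ℂ) := Matrix.linftyOpSemiNormedRing
  letI : NormedRing (Matrix (Fin n) (Fin n) ℂ) := Matrix.linftyOpNormedRing
  letI : NormedAlgebra ℝ (Matrix (Fin n) (Fin n) ℂ) := Matrix.linftyOpNormedAlgebra
  letI : NormedAlgebra ℂ (Matrix (Fin n) (Fin n) ℂ) := Matrix.linftyOpNormedAlgebra
  letI : NormedAlgebra ℚ (Matrix (Fin n) (Fin n) ℝ) := NormedAlgebra.restrictScalars ℚ ℝ _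
  have hcoe : ⇑(Complex.ofRealHom.mapMatrix :
      Matrix (Fin n) (Fin n) ℝ →+* Matrix (Fin n) (Fin n) ℂ)
      = fun M : Matrix (Fin n) (Fin n) ℝ => M.map Complex.ofReal := rfl
  have hcont : Continuous (Complex.ofRealHom.mapMatrix :
      Matrix (Fin n) (Fin n) ℝ →+* Matrix (Fin n) (Fin n) ℂ) := by
    rw [hcoe]
    exact continuous_id.matrix_map Complex.continuous_ofReal
  have h1 := map_exp (Complex.ofRealHom.mapMatrix :
      Matrix (Fin n) (Fin n) ℝ →+* Matrix (Fin n) (Fin n) ℂ) hcont (ξ • A)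
  have h2 : (Complex.ofRealHom.mapMatrix (ξ • A) : Matrix (Fin n) (Fin n) ℂ)
      = (ξ : ℂ) • A.map Complex.ofReal := by
    ext i j
    simp [RingHom.mapMatrix_apply, Matrix.map_apply, Matrix.smul_apply]
  rw [RingHom.mapMatrix_apply] at h1
  rw [h2] at h1
  exact h1

lemma summable_pow (A : Matrix (Fin n) (Fin n) ℝ) (hH : IsHurwitz A) {ξ : ℝ} (hξ : 0 < ξ) :
    Summable (fun k : ℕ => (exp (ξ • A)) ^ k) := by
  have hent : ∀ i j, Summable (fun k : ℕ => ((exp (ξ • A)) ^ k) i j) := by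
    intro i j
    have h1 := summable_mulVec (A' := A.map Complex.ofReal) (fun μ h => hH μ h) hξ (Pi.single j 1)
    have h2 := h1.map (Pi.evalAddMonoidHom (fun _ : Fin n => ℂ) i) (continuous_apply i)
    have h3 : ∀ k : ℕ, (Pi.evalAddMonoidHom (fun _ : Fin n => ℂ) i)
        ((exp ((ξ : ℂ) • A.map Complex.ofReal)) ^ k *ᵥ Pi.single j 1)
        = ((((exp (ξ • A)) ^ k) i j : ℝ) : ℂ) := by
      intro k
      have h4 : (exp ((ξ : ℂ) • A.map Complex.ofReal)) ^ k
          = ((exp (ξ • A)) ^ k).map Complex.ofReal := by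
        rw [← map_exp_smul, show (Complex.ofReal : ℝ → ℂ) = ⇑Complex.ofRealHom from rfl,
          ← RingHom.mapMatrix_apply, ← RingHom.mapMatrix_apply, map_pow]
      simp only [Pi.evalAddMonoidHom_apply, h4, Matrix.mulVec_single, Matrix.map_apply,
        Complex.ofRealHom_eq_coe, mul_one,
          MulOpposite.op_one, one_smul, Matrix.col_apply]
    have h5 : Summable (fun k : ℕ => ((((exp (ξ • A)) ^ k) i j : ℝ) : ℂ)) := by
      rw [show (fun k : ℕ => ((((exp (ξ • A)) ^ k) i j : ℝ) : ℂ)) = _ from (funext h3).symm]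
      exact h2
    exact Complex.summable_ofReal.mp h5
  exact Pi.summable.mpr fun i => Pi.summable.mpr fun j => hent i j

end Aux3
theorem stmt0 {n : ℕ} (A : Matrix (Fin n) (Fin n) ℝ)
    (hM : IsMetzler A) (hH : IsHurwitz A) (ξ : ℝ) (hξ : 0 < ξ) :
    IsUnit (exp (-ξ • A) - 1) ∧
    (∀ i j, 0 ≤ ((exp (-ξ • A) - 1)⁻¹ : Matrix (Fin n) (Fin n) ℝ) i j) ∧
    (∀ i, 0 < ((exp (-ξ • A) - 1)⁻¹ : Matrix (Fin n) (Fin n) ℝ) i i) := by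
  have hMz : ∀ i j, i ≠ j → 0 ≤ (ξ • A) i j := by
    intro i j hij
    rw [Matrix.smul_apply, smul_eq_mul]
    exact mul_nonneg hξ.le (hM i j hij)
  obtain ⟨hBnn, hBdiag⟩ := exp_entries_of_metzler hMz
  set B := exp (ξ • A) with hB
  have hpow : ∀ (k : ℕ) i j, 0 ≤ (B ^ k) i j := pow_entry_nonneg hBnn
  have hsum : Summable fun k : ℕ => B ^ k := summable_pow A hH hξ
  have hS := hsum.hasSum
  set S := ∑' k : ℕ, B ^ k with hSdef
  have htend0 : Filter.Tendsto (fun k : ℕ => B ^ k) Filter.atTop (nhds 0) :=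
    hsum.tendsto_atTop_zero
  have hpartial : Filter.Tendsto (fun N => ∑ k ∈ Finset.range N, B ^ k) Filter.atTop (nhds S) :=
    hS.tendsto_sum_nat
  have h1 : S * (B - 1) = -1 := by
    have ht1 : Filter.Tendsto (fun N => (∑ k ∈ Finset.range N, B ^ k) * (B - 1)) Filter.atTop
        (nhds (S * (B - 1))) := hpartial.mul_const _
    have ht2 : Filter.Tendsto (fun N => (∑ k ∈ Finset.range N, B ^ k) * (B - 1)) Filter.atTop
        (nhds (-1)) := by
      simp only [geom_sum_mul]
      simpa using htend0.sub_const 1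
    exact tendsto_nhds_unique ht1 ht2
  have h2 : (B - 1) * S = -1 := by
    have ht1 : Filter.Tendsto (fun N => (B - 1) * ∑ k ∈ Finset.range N, B ^ k) Filter.atTop
        (nhds ((B - 1) * S)) := hpartial.const_mul _
    have ht2 : Filter.Tendsto (fun N => (B - 1) * ∑ k ∈ Finset.range N, B ^ k) Filter.atTop
        (nhds (-1)) := by
      simp only [mul_geom_sum]
      simpa using htend0.sub_const 1
    exact tendsto_nhds_unique ht1 ht2
  have hSB : S * (1 - B) = 1 := by rw [← neg_sub B 1, mul_neg, h1, neg_neg]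
  have hBS : (1 - B) * S = 1 := by rw [← neg_sub B 1, neg_mul, h2, neg_neg]
  set E := exp (-ξ • A) with hE
  have hcomm : Commute ((-ξ) • A) (ξ • A) := ((Commute.refl A).smul_left (-ξ)).smul_right ξ
  have hEB : E * B = 1 := by
    rw [hE, hB, ← Matrix.exp_add_of_commute _ _ hcomm,
      show (-ξ) • A + ξ • A = 0 by module, exp_zero]
  have hBE : B * E = 1 := by
    rw [hE, hB, ← Matrix.exp_add_of_commute _ _ hcomm.symm,
      show ξ • A + (-ξ) • A = 0 by module, exp_zero]
  set X := S * B with hX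
  have hE1 : E - 1 = E * (1 - B) := by rw [mul_one_sub, hEB]
  have hMX : (E - 1) * X = 1 := by
    rw [hE1, hX, mul_assoc, ← mul_assoc (1 - B), hBS, one_mul, hEB]
  have hXM : X * (E - 1) = 1 := by
    rw [hX, mul_assoc, mul_sub, hBE, mul_one, hSB]
  have hUnit : IsUnit (E - 1) := ⟨⟨E - 1, X, hMX, hXM⟩, rfl⟩
  have hInv : (E - 1)⁻¹ = X := Matrix.inv_eq_right_inv hMX
  have hSent : ∀ i j, 0 ≤ S i j := fun i j =>
    hasSum_le (fun k => hpow k i j) hasSum_zero (hasSum_entry hS i j)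
  have hSdiag : ∀ i, (1 : ℝ) ≤ S i i := by
    intro i
    have := le_hasSum (hasSum_entry hS i i) 0 (fun k _ => hpow k i i)
    simpa using this
  refine ⟨hUnit, ?_, ?_⟩
  · intro i j
    rw [hInv, hX, Matrix.mul_apply]
    exact Finset.sum_nonneg fun l _ => mul_nonneg (hSent i l) (hBnn l j)
  · intro i
    rw [hInv, hX, Matrix.mul_apply]
    refine Finset.sum_pos' (fun l _ => mul_nonneg (hSent i l) (hBnn l i)) ⟨i, Finset.mem_univ i, ?_⟩
    exact mul_pos (lt_of_lt_of_le one_pos (hSdiag i)) (hBdiag i)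
end

section
/- Let A be an n×n real Metzler and Hurwitz matrix, Θ(ξ) = (exp(−ξA) − I)^{−1} for ξ > 0, and let b, c be nonnegative column vectors in ℝⁿ. Then cᵀΘ(ξ)b > 0 for all ξ > 0 if and only if there exist indices i, j with c_i > 0, b_j > 0, and either i = j or the graph of A contains a directed walk from i to j. If this condition fails, then cᵀΘ(ξ)b = 0 for all ξ > 0. -/
open Matrix NormedSpace

/-- There is a directed walk from `i` to `j` in the graph of `A`: a finite sequence
`i = p 0, p 1, …, p L = j` with `L ≥ 1` and `A (p t) (p (t+1)) > 0` for every `t < L`. -/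
def HasWalk {n : ℕ} (A : Matrix (Fin n) (Fin n) ℝ) (i j : Fin n) : Prop :=
  ∃ (L : ℕ) (p : ℕ → Fin n), 1 ≤ L ∧ p 0 = i ∧ p L = j ∧
    ∀ t < L, 0 < A (p t) (p (t + 1))

namespace WalkAux

open Filter

variable {n : ℕ}

lemma hasSum_exp_entry (M : Matrix (Fin n) (Fin n) ℝ) (p q : Fin n) :
    HasSum (fun k : ℕ => ((Nat.factorial k : ℝ))⁻¹ * (M ^ k) p q) (exp M p q) := by
  letI : SeminormedRing (Matrix (Fin n) (Fin n) ℝ) := Matrix.linftyOpSemiNormedRing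
  letI : NormedRing (Matrix (Fin n) (Fin n) ℝ) := Matrix.linftyOpNormedRing
  letI : NormedAlgebra ℝ (Matrix (Fin n) (Fin n) ℝ) := Matrix.linftyOpNormedAlgebra
  have h := exp_series_hasSum_exp' (𝕂 := ℝ) M
  let f : Matrix (Fin n) (Fin n) ℝ →ₗ[ℝ] ℝ :=
    { toFun := fun M => M p q
      map_add' := fun _ _ => rfl
      map_smul' := fun _ _ => rfl }
  have hf : Continuous f := f.continuous_of_finiteDimensional
  have h2 := h.mapL (⟨f, hf⟩ : Matrix (Fin n) (Fin n) ℝ →L[ℝ] ℝ)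
  exact h2

lemma pow_entry_nonneg {M : Matrix (Fin n) (Fin n) ℝ} (h : ∀ p q, 0 ≤ M p q) :
    ∀ (k : ℕ) (p q : Fin n), 0 ≤ (M ^ k) p q := by
  intro k
  induction k with
  | zero =>
    intro p q
    by_cases hpq : p = q
    · subst hpq; simp [Matrix.one_apply_eq]
    · simp [pow_zero, Matrix.one_apply_ne hpq]
  | succ k ih =>
    intro p q
    rw [pow_succ, Matrix.mul_apply]
    exact Finset.sum_nonneg fun r _ => mul_nonneg (ih p r) (h r q)

lemma exp_entry_nonneg {M : Matrix (Fin n) (Fin n) ℝ} (h : ∀ p q, 0 ≤ M p q) (p q : Fin n) :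
    0 ≤ exp M p q :=
  hasSum_le (fun k => mul_nonneg (inv_nonneg.2 (Nat.cast_nonneg _)) (pow_entry_nonneg h k p q))
    hasSum_zero (hasSum_exp_entry M p q)

lemma le_exp_entry {M : Matrix (Fin n) (Fin n) ℝ} (h : ∀ p q, 0 ≤ M p q) (m : ℕ) (p q : Fin n) :
    ((Nat.factorial m : ℝ))⁻¹ * (M ^ m) p q ≤ exp M p q :=
  le_hasSum (hasSum_exp_entry M p q) m
    (fun k _ => mul_nonneg (inv_nonneg.2 (Nat.cast_nonneg _)) (pow_entry_nonneg h k p q))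

lemma exp_entry_eq_zero {M : Matrix (Fin n) (Fin n) ℝ} {p q : Fin n}
    (h : ∀ k : ℕ, (M ^ k) p q = 0) : exp M p q = 0 := by
  have h2 := hasSum_exp_entry M p q
  have : (fun k : ℕ => ((Nat.factorial k : ℝ))⁻¹ * (M ^ k) p q) = fun _ => (0 : ℝ) := by
    funext k; rw [h k, mul_zero]
  rw [this] at h2
  exact h2.unique hasSum_zero

noncomputable def sb (A : Matrix (Fin n) (Fin n) ℝ) : ℝ := 1 + ∑ i, |A i i|

noncomputable def NN (A : Matrix (Fin n) (Fin n) ℝ) : Matrix (Fin n) (Fin n) ℝ :=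
  A + sb A • (1 : Matrix (Fin n) (Fin n) ℝ)

lemma sb_pos (A : Matrix (Fin n) (Fin n) ℝ) : 0 < sb A := by
  have : (0:ℝ) ≤ ∑ i, |A i i| := Finset.sum_nonneg fun i _ => abs_nonneg _
  unfold sb; linarith

lemma NN_apply (A : Matrix (Fin n) (Fin n) ℝ) (p q : Fin n) :
    NN A p q = A p q + sb A * (1 : Matrix (Fin n) (Fin n) ℝ) p q := by
  simp [NN]

lemma NN_apply_ne (A : Matrix (Fin n) (Fin n) ℝ) {p q : Fin n} (h : p ≠ q) :
    NN A p q = A p q := by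
  rw [NN_apply, Matrix.one_apply_ne h, mul_zero, add_zero]

lemma NN_diag_pos (A : Matrix (Fin n) (Fin n) ℝ) (p : Fin n) : 0 < NN A p p := by
  rw [NN_apply, Matrix.one_apply_eq, mul_one]
  have h1 : |A p p| ≤ ∑ i, |A i i| :=
    Finset.single_le_sum (fun i _ => abs_nonneg (A i i)) (Finset.mem_univ p)
  have h2 : -A p p ≤ |A p p| := neg_le_abs _
  unfold sb; linarith

lemma NN_nonneg {A : Matrix (Fin n) (Fin n) ℝ} (hM : IsMetzler A) (p q : Fin n) :
    0 ≤ NN A p q := by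
  by_cases hpq : p = q
  · subst hpq; exact (NN_diag_pos A p).le
  · rw [NN_apply_ne A hpq]
    exact hM p q hpq

lemma le_NN {A : Matrix (Fin n) (Fin n) ℝ} (p q : Fin n) : A p q ≤ NN A p q := by
  rw [NN_apply]
  have : 0 ≤ (1 : Matrix (Fin n) (Fin n) ℝ) p q := by
    by_cases hpq : p = q
    · subst hpq; simp [Matrix.one_apply_eq]
    · simp [Matrix.one_apply_ne hpq]
  nlinarith [sb_pos A]

lemma decomp (A : Matrix (Fin n) (Fin n) ℝ) (t : ℝ) :
    t • A = t • NN A + (-(t * sb A)) • (1 : Matrix (Fin n) (Fin n) ℝ) := by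
  rw [NN, smul_add, smul_smul, add_assoc, ← add_smul]
  simp

lemma exp_smul_eq (A : Matrix (Fin n) (Fin n) ℝ) (t : ℝ) :
    exp (t • A) = Real.exp (-(t * sb A)) • exp (t • NN A) := by
  letI : SeminormedRing (Matrix (Fin n) (Fin n) ℝ) := Matrix.linftyOpSemiNormedRing
  letI : NormedRing (Matrix (Fin n) (Fin n) ℝ) := Matrix.linftyOpNormedRing
  letI : NormedAlgebra ℝ (Matrix (Fin n) (Fin n) ℝ) := Matrix.linftyOpNormedAlgebra
  have hc : Commute (t • NN A) ((-(t * sb A)) • (1 : Matrix (Fin n) (Fin n) ℝ)) :=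
    ((Commute.one_right (t • NN A)).smul_right _)
  rw [decomp A t, Matrix.exp_add_of_commute _ _ hc]
  have h1 : ((-(t * sb A)) • (1 : Matrix (Fin n) (Fin n) ℝ))
      = algebraMap ℝ (Matrix (Fin n) (Fin n) ℝ) (-(t * sb A)) :=
    (Algebra.algebraMap_eq_smul_one _).symm
  have hexp : exp (algebraMap ℝ (Matrix (Fin n) (Fin n) ℝ) (-(t * sb A)))
      = algebraMap ℝ (Matrix (Fin n) (Fin n) ℝ) (Real.exp (-(t * sb A))) := by
    rw [Real.exp_eq_exp_ℝ]; exact (algebraMap_exp_comm _).symm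
  rw [h1, hexp, Algebra.algebraMap_eq_smul_one, mul_smul_comm, mul_one]

lemma walk_single {A : Matrix (Fin n) (Fin n) ℝ} {r j : Fin n} (h : 0 < A r j) :
    HasWalk A r j := by
  refine ⟨1, fun k => if k = 0 then r else j, le_refl 1, by simp, by simp, ?_⟩
  intro t ht
  interval_cases t
  simpa using h

lemma walk_extend {A : Matrix (Fin n) (Fin n) ℝ} {i r j : Fin n} (h : HasWalk A i r)
    (harc : 0 < A r j) : HasWalk A i j := by
  obtain ⟨L, p, hL, hp0, hpL, hstep⟩ := h
  refine ⟨L + 1, fun k => if k ≤ L then p k else j, le_trans hL (Nat.le_succ L), ?_, ?_, ?_⟩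
  · simp [Nat.zero_le, hp0]
  · simp
  · intro t ht
    rcases Nat.lt_succ_iff_lt_or_eq.mp ht with h' | h'
    · have h1 : t ≤ L := h'.le
      have h2 : t + 1 ≤ L := h'
      simpa [h1, h2] using hstep t h'
    · subst h'
      simp [le_refl, hpL, harc]

lemma walk_comp {A : Matrix (Fin n) (Fin n) ℝ} {i r j : Fin n}
    (h : i = r ∨ HasWalk A i r) (harc : 0 < A r j) : HasWalk A i j := by
  rcases h with rfl | h
  · exact walk_single harc
  · exact walk_extend h harc

lemma pow_pos_of_walk {A : Matrix (Fin n) (Fin n) ℝ} (hM : IsMetzler A) :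
    ∀ (L : ℕ) (p : ℕ → Fin n), (∀ t < L, 0 < NN A (p t) (p (t + 1))) →
      0 < ((NN A) ^ L) (p 0) (p L) := by
  intro L
  induction L with
  | zero => intro p _; simp [Matrix.one_apply_eq]
  | succ L ih =>
    intro p hp
    rw [pow_succ, Matrix.mul_apply]
    refine Finset.sum_pos' (fun r _ => mul_nonneg (pow_entry_nonneg (NN_nonneg hM) L _ r)
      (NN_nonneg hM r _)) ⟨p L, Finset.mem_univ _, ?_⟩
    exact mul_pos (ih p fun t ht => hp t (Nat.lt_succ_of_lt ht)) (hp L (Nat.lt_succ_self L))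

lemma NN_pos_of_A_pos {A : Matrix (Fin n) (Fin n) ℝ} {p q : Fin n} (h : 0 < A p q) :
    0 < NN A p q := lt_of_lt_of_le h (le_NN p q)

lemma exists_pow_pos {A : Matrix (Fin n) (Fin n) ℝ} (hM : IsMetzler A) {i j : Fin n}
    (h : i = j ∨ HasWalk A i j) : ∃ m : ℕ, 0 < ((NN A) ^ m) i j := by
  rcases h with rfl | ⟨L, p, _hL, hp0, hpL, hstep⟩
  · exact ⟨0, by simp [Matrix.one_apply_eq]⟩
  · refine ⟨L, ?_⟩
    have := pow_pos_of_walk hM L p fun t ht => ?_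
    · rwa [hp0, hpL] at this
    · by_cases hpt : p t = p (t + 1)
      · rw [hpt]; exact NN_diag_pos A _
      · exact NN_pos_of_A_pos (hstep t ht)

lemma pow_ne_zero_walk {A : Matrix (Fin n) (Fin n) ℝ} (hM : IsMetzler A) :
    ∀ (m : ℕ) (i j : Fin n), ((NN A) ^ m) i j ≠ 0 → i = j ∨ HasWalk A i j := by
  intro m
  induction m with
  | zero =>
    intro i j h
    by_contra hc
    push_neg at hc
    exact h (by simp [pow_zero, Matrix.one_apply_ne hc.1])
  | succ m ih =>
    intro i j h
    rw [pow_succ, Matrix.mul_apply] at h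
    obtain ⟨r, _, hr⟩ := Finset.exists_ne_zero_of_sum_ne_zero h
    have h1 : ((NN A) ^ m) i r ≠ 0 := fun h' => hr (by rw [h', zero_mul])
    have h2 : NN A r j ≠ 0 := fun h' => hr (by rw [h', mul_zero])
    have hir := ih i r h1
    by_cases hrj : r = j
    · subst hrj; exact hir
    · right
      have heq : NN A r j = A r j := NN_apply_ne A hrj
      have harc : 0 < A r j := lt_of_le_of_ne (hM r j hrj) (fun h' => h2 (by rw [heq, ← h']))
      exact walk_comp hir harc

lemma exp_smul_entry_nonneg {A : Matrix (Fin n) (Fin n) ℝ} (hM : IsMetzler A) {t : ℝ}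
    (ht : 0 ≤ t) (p q : Fin n) : 0 ≤ exp (t • A) p q := by
  rw [exp_smul_eq A t]
  have h1 : ∀ p q, 0 ≤ (t • NN A) p q := fun p q =>
    mul_nonneg ht (NN_nonneg hM p q)
  have := exp_entry_nonneg h1 p q
  rw [Matrix.smul_apply]
  exact mul_nonneg (Real.exp_pos _).le this

lemma exp_smul_entry_pos {A : Matrix (Fin n) (Fin n) ℝ} (hM : IsMetzler A) {t : ℝ}
    (ht : 0 < t) {i j : Fin n} (h : i = j ∨ HasWalk A i j) : 0 < exp (t • A) i j := by
  rw [exp_smul_eq A t, Matrix.smul_apply]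
  refine mul_pos (Real.exp_pos _) ?_
  obtain ⟨m, hm⟩ := exists_pow_pos hM h
  have h1 : ∀ p q, 0 ≤ (t • NN A) p q := fun p q => mul_nonneg ht.le (NN_nonneg hM p q)
  refine lt_of_lt_of_le ?_ (le_exp_entry h1 m i j)
  have : ((t • NN A) ^ m) i j = t ^ m * ((NN A) ^ m) i j := by
    rw [smul_pow, Matrix.smul_apply, smul_eq_mul]
  rw [this]
  positivity

lemma exp_smul_entry_zero {A : Matrix (Fin n) (Fin n) ℝ} (hM : IsMetzler A) (t : ℝ)
    {i j : Fin n} (hij : i ≠ j) (hw : ¬ HasWalk A i j) : exp (t • A) i j = 0 := by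
  rw [exp_smul_eq A t, Matrix.smul_apply]
  have hz : ∀ k : ℕ, ((t • NN A) ^ k) i j = 0 := by
    intro k
    have hNk : ((NN A) ^ k) i j = 0 := by
      by_contra hne
      rcases pow_ne_zero_walk hM k i j hne with h | h
      · exact hij h
      · exact hw h
    rw [smul_pow, Matrix.smul_apply, hNk, smul_zero]
  rw [exp_entry_eq_zero hz, smul_zero]


lemma map_mul_ofReal (X Y : Matrix (Fin n) (Fin n) ℝ) :
    (X * Y).map ((↑) : ℝ → ℂ) = X.map ((↑) : ℝ → ℂ) * Y.map ((↑) : ℝ → ℂ) := by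
  ext p q
  simp [Matrix.map_apply, Matrix.mul_apply]

lemma map_smul_ofReal (M : Matrix (Fin n) (Fin n) ℝ) (t : ℝ) :
    (t • M).map ((↑) : ℝ → ℂ) = t • (M.map ((↑) : ℝ → ℂ)) := by
  ext p q
  simp [Matrix.map_apply, Complex.real_smul]

lemma map_sub_one (M : Matrix (Fin n) (Fin n) ℝ) :
    (M - 1).map ((↑) : ℝ → ℂ) = M.map ((↑) : ℝ → ℂ) - 1 := by
  ext p q
  by_cases hpq : p = q
  · subst hpq; simp [Matrix.map_apply, Matrix.one_apply_eq]
  · simp [Matrix.map_apply, Matrix.one_apply_ne hpq]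

lemma mapC_exp (M : Matrix (Fin n) (Fin n) ℝ) :
    (exp M).map ((↑) : ℝ → ℂ) = exp (M.map ((↑) : ℝ → ℂ)) := by
  letI : SeminormedRing (Matrix (Fin n) (Fin n) ℝ) := Matrix.linftyOpSemiNormedRing
  letI : NormedRing (Matrix (Fin n) (Fin n) ℝ) := Matrix.linftyOpNormedRing
  letI : NormedAlgebra ℝ (Matrix (Fin n) (Fin n) ℝ) := Matrix.linftyOpNormedAlgebra
  letI : SeminormedRing (Matrix (Fin n) (Fin n) ℂ) := Matrix.linftyOpSemiNormedRing
  letI : NormedRing (Matrix (Fin n) (Fin n) ℂ) := Matrix.linftyOpNormedRing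
  letI : NormedAlgebra ℝ (Matrix (Fin n) (Fin n) ℂ) := Matrix.linftyOpNormedAlgebra
  letI : NormedAlgebra ℚ (Matrix (Fin n) (Fin n) ℝ) := Matrix.linftyOpNormedAlgebra
  have hf : Continuous (fun M : Matrix (Fin n) (Fin n) ℝ =>
      Complex.ofRealHom.mapMatrix M) := by
    simp only [RingHom.mapMatrix_apply]
    exact continuous_id.matrix_map Complex.continuous_ofReal
  have h := map_exp (Complex.ofRealHom.mapMatrix
    (m := Fin n)) hf M
  exact h

lemma eig_of_mem_spectrum {B : Matrix (Fin n) (Fin n) ℂ} {lam : ℂ} (h : lam ∈ spectrum ℂ B) :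
    ∃ v : Fin n → ℂ, v ≠ 0 ∧ B.mulVec v = lam • v := by
  rw [spectrum.mem_iff, Matrix.isUnit_iff_isUnit_det, isUnit_iff_ne_zero, not_ne_iff] at h
  obtain ⟨v, hv0, hv⟩ := Matrix.exists_mulVec_eq_zero_iff.mpr h
  refine ⟨v, hv0, ?_⟩
  rw [Matrix.sub_mulVec, Algebra.algebraMap_eq_smul_one, Matrix.smul_mulVec,
    Matrix.one_mulVec, sub_eq_zero] at hv
  exact hv.symm

lemma mem_spectrum_of_eig {B : Matrix (Fin n) (Fin n) ℂ} {mu : ℂ} {v : Fin n → ℂ}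
    (hv0 : v ≠ 0) (hv : B.mulVec v = mu • v) : mu ∈ spectrum ℂ B := by
  rw [spectrum.mem_iff, Matrix.isUnit_iff_isUnit_det, isUnit_iff_ne_zero, not_ne_iff,
    ← Matrix.exists_mulVec_eq_zero_iff]
  exact ⟨v, hv0, by
    rw [Matrix.sub_mulVec, Algebra.algebraMap_eq_smul_one, Matrix.smul_mulVec,
      Matrix.one_mulVec, hv, sub_self]⟩

set_option maxHeartbeats 1000000 in
lemma exists_common_eig (Ac Bc : Matrix (Fin n) (Fin n) ℂ) (hcomm : Ac * Bc = Bc * Ac)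
    {lam : ℂ} {v0 : Fin n → ℂ} (hv0 : v0 ≠ 0) (hB : Bc.mulVec v0 = lam • v0) :
    ∃ (mu : ℂ) (v : Fin n → ℂ), v ≠ 0 ∧ Ac.mulVec v = mu • v ∧ Bc.mulVec v = lam • v := by
  classical
  set g : (Fin n → ℂ) →ₗ[ℂ] (Fin n → ℂ) := Bc.mulVecLin - lam • LinearMap.id with hg
  set V : Submodule ℂ (Fin n → ℂ) := LinearMap.ker g with hV
  have hmem : ∀ x, x ∈ V ↔ Bc.mulVec x = lam • x := by
    intro x
    simp [hV, hg, LinearMap.mem_ker, sub_eq_zero, Matrix.mulVecLin_apply]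
  have hv0V : v0 ∈ V := (hmem v0).mpr hB
  haveI : Nontrivial V := nontrivial_of_ne ⟨v0, hv0V⟩ 0 (by simp [hv0, Subtype.ext_iff])
  have hstab : ∀ x ∈ V, Ac.mulVecLin x ∈ V := by
    intro x hx
    rw [hmem] at hx ⊢
    rw [Matrix.mulVecLin_apply, Matrix.mulVec_mulVec, ← hcomm, ← Matrix.mulVec_mulVec, hx,
      Matrix.mulVec_smul]
  obtain ⟨mu, hmu⟩ := Module.End.exists_eigenvalue ((Ac.mulVecLin).restrict hstab)
  obtain ⟨w, hw⟩ := hmu.exists_hasEigenvector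
  have hw1 : ((Ac.mulVecLin).restrict hstab) w = mu • w := Module.End.mem_eigenspace_iff.mp hw.1
  refine ⟨mu, (w : Fin n → ℂ), by simpa using hw.2, ?_, (hmem _).mp w.2⟩
  have := congrArg (Subtype.val) hw1
  simpa [LinearMap.restrict_coe_apply, Matrix.mulVecLin_apply] using this



lemma exp_mulVec_eig (A : Matrix (Fin n) (Fin n) ℝ) (t : ℝ) {mu : ℂ} {v : Fin n → ℂ}
    (hv : (A.map ((↑) : ℝ → ℂ)).mulVec v = mu • v) :
    ((exp (t • A)).map ((↑) : ℝ → ℂ)).mulVec v = Complex.exp (t * mu) • v := by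
  letI : SeminormedRing (Matrix (Fin n) (Fin n) ℂ) := Matrix.linftyOpSemiNormedRing
  letI : NormedRing (Matrix (Fin n) (Fin n) ℂ) := Matrix.linftyOpNormedRing
  letI : NormedAlgebra ℝ (Matrix (Fin n) (Fin n) ℂ) := Matrix.linftyOpNormedAlgebra
  rw [mapC_exp, map_smul_ofReal]
  set Ac := A.map ((↑) : ℝ → ℂ) with hAc
  have hpow : ∀ k : ℕ, (Ac ^ k).mulVec v = mu ^ k • v := by
    intro k
    induction k with
    | zero => simp [Matrix.one_mulVec]
    | succ k ih =>
      rw [pow_succ', ← Matrix.mulVec_mulVec, ih, Matrix.mulVec_smul, hv, smul_smul]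
      rw [pow_succ]
  have h := exp_series_hasSum_exp' (𝕂 := ℝ) (t • Ac)
  let f : Matrix (Fin n) (Fin n) ℂ →ₗ[ℝ] (Fin n → ℂ) :=
    { toFun := fun M => M.mulVec v
      map_add' := fun X Y => Matrix.add_mulVec X Y v
      map_smul' := fun c X => Matrix.smul_mulVec c X v }
  have hf : Continuous f := f.continuous_of_finiteDimensional
  have h2 := h.mapL (⟨f, hf⟩ : Matrix (Fin n) (Fin n) ℂ →L[ℝ] (Fin n → ℂ))
  have hterm : (fun k : ℕ => ((Nat.factorial k : ℝ))⁻¹ • ((t • Ac) ^ k).mulVec v)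
      = fun k : ℕ => ((((t : ℂ) * mu) ^ k / (Nat.factorial k : ℂ))) • v := by
    funext k
    rw [smul_pow, Matrix.smul_mulVec, hpow k]
    funext i
    simp only [Pi.smul_apply, Complex.real_smul, smul_eq_mul]
    push_cast
    rw [mul_pow]
    ring
  have h2' : HasSum (fun k : ℕ => ((((t : ℂ) * mu) ^ k / (Nat.factorial k : ℂ))) • v)
      ((exp (t • Ac)).mulVec v) := by
    rw [← hterm]
    simp only [← Matrix.smul_mulVec]
    exact h2
  have h3 := (expSeries_div_hasSum_exp ((t : ℂ) * mu)).smul_const v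
  have := h2'.unique h3
  rw [this, ← Complex.exp_eq_exp_ℂ]

lemma exp_eig_from_spectrum (A : Matrix (Fin n) (Fin n) ℝ) (t : ℝ) {lam : ℂ}
    {v0 : Fin n → ℂ} (hv0 : v0 ≠ 0)
    (hB : ((exp (t • A)).map ((↑) : ℝ → ℂ)).mulVec v0 = lam • v0) :
    ∃ mu ∈ spectrum ℂ (A.map ((↑) : ℝ → ℂ)), lam = Complex.exp (t * mu) := by
  have hcommR : A * exp (t • A) = exp (t • A) * A := by
    letI : SeminormedRing (Matrix (Fin n) (Fin n) ℝ) := Matrix.linftyOpSemiNormedRing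
    letI : NormedRing (Matrix (Fin n) (Fin n) ℝ) := Matrix.linftyOpNormedRing
    letI : NormedAlgebra ℝ (Matrix (Fin n) (Fin n) ℝ) := Matrix.linftyOpNormedAlgebra
    exact ((Commute.refl A).smul_right t).exp_right
  have hcomm : (A.map ((↑) : ℝ → ℂ)) * ((exp (t • A)).map ((↑) : ℝ → ℂ))
      = ((exp (t • A)).map ((↑) : ℝ → ℂ)) * (A.map ((↑) : ℝ → ℂ)) := by
    rw [← map_mul_ofReal, ← map_mul_ofReal, hcommR]
  obtain ⟨mu, v, hv, hAv, hBv⟩ := exists_common_eig _ _ hcomm hv0 hB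
  refine ⟨mu, mem_spectrum_of_eig hv hAv, ?_⟩
  have h1 := exp_mulVec_eig A t hAv
  have heq : lam • v = Complex.exp (↑t * mu) • v := by rw [← hBv, h1]
  exact smul_left_injective ℂ hv heq

lemma det_unit {A : Matrix (Fin n) (Fin n) ℝ} (hH : IsHurwitz A) {ξ : ℝ} (hξ : 0 < ξ) :
    IsUnit (exp (-ξ • A) - 1).det := by
  by_contra h
  rw [isUnit_iff_ne_zero, not_ne_iff] at h
  have hdetC : ((exp (-ξ • A) - 1).map ((↑) : ℝ → ℂ)).det = 0 := by
    have h2 := Complex.ofRealHom.map_det (exp (-ξ • A) - 1)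
    rw [h, map_zero] at h2
    exact h2.symm
  obtain ⟨v, hv0, hv⟩ := Matrix.exists_mulVec_eq_zero_iff.mpr hdetC
  rw [map_sub_one, Matrix.sub_mulVec, Matrix.one_mulVec, sub_eq_zero] at hv
  have hv' : ((exp (-ξ • A)).map ((↑) : ℝ → ℂ)).mulVec v = (1 : ℂ) • v := by
    rw [hv, one_smul]
  obtain ⟨mu, hmu, h1⟩ := exp_eig_from_spectrum A (-ξ) hv0 hv'
  have habs := congrArg (‖·‖) h1
  rw [norm_one, Complex.norm_exp] at habs
  have hre : (((-ξ : ℝ) : ℂ) * mu).re = -ξ * mu.re := by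
    simp [Complex.mul_re]
  rw [hre] at habs
  have h0 : -ξ * mu.re = 0 := (Real.exp_eq_one_iff _).mp habs.symm
  have := hH mu hmu
  nlinarith


lemma map_one_ofReal : ((1 : Matrix (Fin n) (Fin n) ℝ).map ((↑) : ℝ → ℂ)) = 1 := by
  ext p q
  by_cases hpq : p = q
  · subst hpq; simp [Matrix.map_apply, Matrix.one_apply_eq]
  · simp [Matrix.map_apply, Matrix.one_apply_ne hpq]

lemma map_pow_ofReal (M : Matrix (Fin n) (Fin n) ℝ) (k : ℕ) :
    (M ^ k).map ((↑) : ℝ → ℂ) = (M.map ((↑) : ℝ → ℂ)) ^ k := by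
  induction k with
  | zero => simp [map_one_ofReal]
  | succ k ih => rw [pow_succ, map_mul_ofReal, ih, pow_succ]

lemma pow_tendsto_zero {A : Matrix (Fin n) (Fin n) ℝ} (hH : IsHurwitz A) (hn : 0 < n)
    {ξ : ℝ} (hξ : 0 < ξ) :
    Tendsto (fun k : ℕ => (exp (ξ • A)) ^ k) atTop (nhds 0) := by
  letI : SeminormedRing (Matrix (Fin n) (Fin n) ℂ) := Matrix.linftyOpSemiNormedRing
  letI : NormedRing (Matrix (Fin n) (Fin n) ℂ) := Matrix.linftyOpNormedRing
  letI : NormedAlgebra ℂ (Matrix (Fin n) (Fin n) ℂ) := Matrix.linftyOpNormedAlgebra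
  haveI : Nonempty (Fin n) := ⟨⟨0, hn⟩⟩
  haveI : Nontrivial (Matrix (Fin n) (Fin n) ℂ) := by
    obtain ⟨i⟩ := (inferInstance : Nonempty (Fin n))
    exact ⟨⟨0, 1, fun h => by simpa [Matrix.one_apply_eq] using congrFun (congrFun h i) i⟩⟩
  set X := exp (ξ • A) with hX
  set Xc := X.map ((↑) : ℝ → ℂ) with hXc
  have hspec : ∀ lam ∈ spectrum ℂ Xc, ‖lam‖₊ < 1 := by
    intro lam hlam
    obtain ⟨v, hv0, hv⟩ := eig_of_mem_spectrum hlam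
    obtain ⟨mu, hmu, h1⟩ := exp_eig_from_spectrum A ξ hv0 hv
    have habs : ‖lam‖ = Real.exp (ξ * mu.re) := by
      rw [h1, Complex.norm_exp]
      congr 1
      simp [Complex.mul_re]
    have h2 : Real.exp (ξ * mu.re) < 1 := by
      rw [← Real.exp_zero]
      exact Real.exp_lt_exp.mpr (by nlinarith [hH mu hmu])
    have h3 : ‖lam‖ < 1 := by rw [habs]; exact h2
    exact_mod_cast h3
  have hrad : spectralRadius ℂ Xc < 1 := by
    have := spectrum.spectralRadius_lt_of_forall_lt Xc hspec
    simpa using this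
  obtain ⟨r, hρr, hr1⟩ := ENNReal.lt_iff_exists_nnreal_btwn.mp hrad
  have hr1' : (r : ℝ) < 1 := by exact_mod_cast hr1
  have hg := spectrum.pow_nnnorm_pow_one_div_tendsto_nhds_spectralRadius Xc
  have hev : ∀ᶠ k : ℕ in atTop, (‖Xc ^ k‖₊ : ENNReal) ^ (1 / (k : ℝ)) < (r : ENNReal) :=
    hg.eventually_lt_const hρr
  have hev2 : ∀ᶠ k : ℕ in atTop, ‖Xc ^ k‖ ≤ (r : ℝ) ^ k := by
    filter_upwards [hev, Filter.eventually_ge_atTop 1] with k hk hk1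
    have hknz : (k : ℝ) ≠ 0 := Nat.cast_ne_zero.mpr (by omega)
    have h3 : ((‖Xc ^ k‖₊ : ENNReal) ^ (1 / (k : ℝ))) ^ (k : ℝ) ≤ (r : ENNReal) ^ (k : ℝ) :=
      ENNReal.rpow_le_rpow hk.le (by positivity)
    rw [← ENNReal.rpow_mul, one_div, inv_mul_cancel₀ hknz, ENNReal.rpow_one,
      ENNReal.rpow_natCast] at h3
    have h4 : ‖Xc ^ k‖₊ ≤ r ^ k := by exact_mod_cast h3
    calc ‖Xc ^ k‖ = ((‖Xc ^ k‖₊ : ℝ)) := (coe_nnnorm _).symm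
      _ ≤ ((r ^ k : NNReal) : ℝ) := by exact_mod_cast h4
      _ = (r : ℝ) ^ k := by push_cast; ring
  refine tendsto_pi_nhds.mpr fun p => tendsto_pi_nhds.mpr fun q => ?_
  simp only [Matrix.zero_apply]
  letI : TopologicalSpace (Matrix (Fin n) (Fin n) ℂ) := @UniformSpace.toTopologicalSpace _
    (@PseudoMetricSpace.toUniformSpace _ Matrix.linftyOpSemiNormedRing.toPseudoMetricSpace)
  let f : Matrix (Fin n) (Fin n) ℂ →ₗ[ℂ] ℂ :=
    { toFun := fun M => M p q
      map_add' := fun _ _ => rfl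
      map_smul' := fun _ _ => rfl }
  have hf : Continuous f := f.continuous_of_finiteDimensional
  let F : Matrix (Fin n) (Fin n) ℂ →L[ℂ] ℂ := ⟨f, hf⟩
  have hbound : ∀ᶠ k : ℕ in atTop, ‖(X ^ k) p q‖ ≤ ‖F‖ * (r : ℝ) ^ k := by
    filter_upwards [hev2] with k hk
    have h5 : (X ^ k) p q = (F (Xc ^ k)).re := by
      rw [hXc, ← map_pow_ofReal]
      rfl
    rw [h5]
    calc ‖(F (Xc ^ k)).re‖ ≤ ‖F (Xc ^ k)‖ := by
          rw [Real.norm_eq_abs]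
          exact Complex.abs_re_le_norm _
      _ ≤ ‖F‖ * ‖Xc ^ k‖ := F.le_opNorm _
      _ ≤ ‖F‖ * (r : ℝ) ^ k := mul_le_mul_of_nonneg_left hk (norm_nonneg F)
  refine squeeze_zero_norm' hbound ?_
  have := (tendsto_pow_atTop_nhds_zero_of_lt_one r.coe_nonneg hr1').const_mul ‖F‖
  simpa using this



lemma theta_ge {A : Matrix (Fin n) (Fin n) ℝ} (hM : IsMetzler A) (hH : IsHurwitz A)
    (hn : 0 < n) {ξ : ℝ} (hξ : 0 < ξ) (p q : Fin n) :
    exp (ξ • A) p q ≤ ((exp (-ξ • A) - 1)⁻¹ : Matrix (Fin n) (Fin n) ℝ) p q := by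
  have hdet : IsUnit (exp (-ξ • A) - 1).det := det_unit hH hξ
  set E : Matrix (Fin n) (Fin n) ℝ := exp (-ξ • A) with hE
  set X : Matrix (Fin n) (Fin n) ℝ := exp (ξ • A) with hX
  set Θ : Matrix (Fin n) (Fin n) ℝ := (E - 1)⁻¹ with hΘ
  have hEX : E * X = 1 := by
    letI : SeminormedRing (Matrix (Fin n) (Fin n) ℝ) := Matrix.linftyOpSemiNormedRing
    letI : NormedRing (Matrix (Fin n) (Fin n) ℝ) := Matrix.linftyOpNormedRing
    letI : NormedAlgebra ℝ (Matrix (Fin n) (Fin n) ℝ) := Matrix.linftyOpNormedAlgebra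
    rw [hE, hX, ← Matrix.exp_add_of_commute _ _ (((Commute.refl A).smul_right ξ).smul_left (-ξ))]
    rw [← add_smul, neg_add_cancel, zero_smul, exp_zero]
  have hTheta1 : Θ * (E - 1) = 1 := Matrix.nonsing_inv_mul _ hdet
  rw [mul_sub, mul_one] at hTheta1
  have hTE : Θ * E = 1 + Θ := sub_eq_iff_eq_add.mp hTheta1
  have hid : Θ = X + Θ * X := by
    calc Θ = Θ * (E * X) := by rw [hEX, mul_one]
      _ = (Θ * E) * X := by rw [mul_assoc]
      _ = (1 + Θ) * X := by rw [hTE]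
      _ = X + Θ * X := by rw [add_mul, one_mul]
  have hiter : ∀ N : ℕ, Θ = (∑ k ∈ Finset.range N, X ^ (k + 1)) + Θ * X ^ N := by
    intro N
    induction N with
    | zero => simp
    | succ N ih =>
      calc Θ = (∑ k ∈ Finset.range N, X ^ (k + 1)) + Θ * X ^ N := ih
        _ = (∑ k ∈ Finset.range N, X ^ (k + 1)) + (X + Θ * X) * X ^ N := by rw [← hid]
        _ = (∑ k ∈ Finset.range N, X ^ (k + 1)) + (X ^ (N + 1) + Θ * X ^ (N + 1)) := by
            rw [add_mul, mul_assoc, ← pow_succ']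
        _ = (∑ k ∈ Finset.range (N + 1), X ^ (k + 1)) + Θ * X ^ (N + 1) := by
            rw [Finset.sum_range_succ, ← add_assoc]
  have hXpos : ∀ p q, 0 ≤ X p q := fun p q => exp_smul_entry_nonneg hM hξ.le p q
  have key : ∀ N : ℕ, 1 ≤ N → X p q + (Θ * X ^ N) p q ≤ Θ p q := by
    intro N hN
    have h7 : Θ p q = (∑ k ∈ Finset.range N, X ^ (k + 1)) p q + (Θ * X ^ N) p q := by
      conv_lhs => rw [hiter N]
      rw [Matrix.add_apply]
    have h8 : X p q ≤ (∑ k ∈ Finset.range N, X ^ (k + 1)) p q := by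
      rw [Matrix.sum_apply]
      have h9 := Finset.single_le_sum (f := fun k => (X ^ (k + 1)) p q)
        (fun k _ => pow_entry_nonneg hXpos (k + 1) p q)
        (Finset.mem_range.mpr (by omega : 0 < N))
      simpa [pow_one] using h9
    linarith
  have h10 : Tendsto (fun N : ℕ => Θ * X ^ N) atTop (nhds 0) := by
    have h11 := (pow_tendsto_zero hH hn hξ).const_mul Θ
    simpa using h11
  have h12 : Tendsto (fun N : ℕ => (Θ * X ^ N) p q) atTop (nhds 0) := by
    have h13 := tendsto_pi_nhds.mp (tendsto_pi_nhds.mp h10 p) q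
    simpa using h13
  have h14 : Tendsto (fun N : ℕ => X p q + (Θ * X ^ N) p q) atTop (nhds (X p q + 0)) :=
    tendsto_const_nhds.add h12
  have h15 := le_of_tendsto h14 (eventually_atTop.mpr ⟨1, fun N hN => key N hN⟩)
  simpa using h15



lemma theta_entry_zero {A : Matrix (Fin n) (Fin n) ℝ} (hH : IsHurwitz A)
    {ξ : ℝ} (hξ : 0 < ξ) (R : Set (Fin n))
    (hA : ∀ p q, p ∈ R → q ∉ R → A p q = 0) {p q : Fin n} (hp : p ∈ R) (hq : q ∉ R) :
    ((exp (-ξ • A) - 1)⁻¹ : Matrix (Fin n) (Fin n) ℝ) p q = 0 := by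
  classical
  set S : Submodule ℝ (Matrix (Fin n) (Fin n) ℝ) :=
    { carrier := {M | ∀ p q, p ∈ R → q ∉ R → M p q = 0}
      add_mem' := fun hX hY p q hp hq => by
        simp only [Matrix.add_apply, hX p q hp hq, hY p q hp hq, add_zero]
      zero_mem' := fun p q hp hq => rfl
      smul_mem' := fun c X hX p q hp hq => by
        simp only [Matrix.smul_apply, hX p q hp hq, smul_zero] } with hS
  have hmemS : ∀ M : Matrix (Fin n) (Fin n) ℝ,
      M ∈ S ↔ ∀ p q, p ∈ R → q ∉ R → M p q = 0 := fun M => Iff.rfl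
  have hmul : ∀ {X Y : Matrix (Fin n) (Fin n) ℝ}, X ∈ S → Y ∈ S → X * Y ∈ S := by
    intro X Y hX hY
    rw [hmemS] at hX hY ⊢
    intro p q hp hq
    rw [Matrix.mul_apply]
    refine Finset.sum_eq_zero fun r _ => ?_
    by_cases hr : r ∈ R
    · rw [hY r q hr hq, mul_zero]
    · rw [hX p r hp hr, zero_mul]
  have h1S : (1 : Matrix (Fin n) (Fin n) ℝ) ∈ S := by
    rw [hmemS]
    intro p q hp hq
    exact Matrix.one_apply_ne (fun h => hq (h ▸ hp))
  have hAS : A ∈ S := (hmemS A).mpr hA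
  have hpowS : ∀ (M : Matrix (Fin n) (Fin n) ℝ) (_ : M ∈ S) (k : ℕ), M ^ k ∈ S := by
    intro M hMS k
    induction k with
    | zero => simpa [pow_zero] using h1S
    | succ k ih => rw [pow_succ]; exact hmul ih hMS
  have hclosed : IsClosed (S : Set (Matrix (Fin n) (Fin n) ℝ)) := by
    have hset : (S : Set (Matrix (Fin n) (Fin n) ℝ)) =
        ⋂ (p) (q) (_ : p ∈ R) (_ : q ∉ R), {M : Matrix (Fin n) (Fin n) ℝ | M p q = 0} := by
      ext M
      simp only [SetLike.mem_coe, hmemS, Set.mem_iInter, Set.mem_setOf_eq]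
    rw [hset]
    exact isClosed_iInter fun p => isClosed_iInter fun q => isClosed_iInter fun _ =>
      isClosed_iInter fun _ =>
        isClosed_eq ((continuous_apply q).comp (continuous_apply p)) continuous_const
  have hES : exp (-ξ • A) ∈ S := by
    letI : SeminormedRing (Matrix (Fin n) (Fin n) ℝ) := Matrix.linftyOpSemiNormedRing
    letI : NormedRing (Matrix (Fin n) (Fin n) ℝ) := Matrix.linftyOpNormedRing
    letI : NormedAlgebra ℝ (Matrix (Fin n) (Fin n) ℝ) := Matrix.linftyOpNormedAlgebra
    have hBS : (-ξ) • A ∈ S := S.smul_mem _ hAS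
    have h := exp_series_hasSum_exp' (𝕂 := ℝ) ((-ξ) • A)
    refine hclosed.mem_of_tendsto h.tendsto_sum_nat (Filter.Eventually.of_forall fun N => ?_)
    exact S.sum_mem fun k _ => S.smul_mem _ (hpowS _ hBS k)
  have hdet := det_unit hH hξ
  have hE1S : exp (-ξ • A) - 1 ∈ S := S.sub_mem hES h1S
  set E1 : Matrix (Fin n) (Fin n) ℝ := exp (-ξ • A) - 1 with hE1
  let L : S →ₗ[ℝ] S :=
    { toFun := fun x => ⟨E1 * (x : Matrix (Fin n) (Fin n) ℝ), hmul hE1S x.2⟩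
      map_add' := fun x y => by
        apply Subtype.ext
        simp [mul_add]
      map_smul' := fun c x => by
        apply Subtype.ext
        simp [Algebra.mul_smul_comm] }
  have hinj : Function.Injective L := by
    intro x y hxy
    have h2 : E1 * (x : Matrix (Fin n) (Fin n) ℝ) = E1 * (y : Matrix (Fin n) (Fin n) ℝ) :=
      congrArg Subtype.val hxy
    have h3 := congrArg (fun M => (E1⁻¹ : Matrix (Fin n) (Fin n) ℝ) * M) h2
    simp only [← mul_assoc, Matrix.nonsing_inv_mul _ hdet, one_mul] at h3
    exact Subtype.ext h3
  obtain ⟨y, hy⟩ := LinearMap.surjective_of_injective hinj ⟨1, h1S⟩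
  have hy' : E1 * (y : Matrix (Fin n) (Fin n) ℝ) = 1 := congrArg Subtype.val hy
  have hTheta : E1⁻¹ = (y : Matrix (Fin n) (Fin n) ℝ) := by
    calc E1⁻¹ = E1⁻¹ * (E1 * (y : Matrix (Fin n) (Fin n) ℝ)) := by rw [hy', mul_one]
      _ = (E1⁻¹ * E1) * (y : Matrix (Fin n) (Fin n) ℝ) := by rw [mul_assoc]
      _ = (y : Matrix (Fin n) (Fin n) ℝ) := by rw [Matrix.nonsing_inv_mul _ hdet, one_mul]
  show E1⁻¹ p q = 0
  rw [hTheta]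
  exact (hmemS _).mp y.2 p q hp hq


end WalkAux

theorem stmt2 {n : ℕ} (A : Matrix (Fin n) (Fin n) ℝ)
    (hM : IsMetzler A) (hH : IsHurwitz A) (b c : Fin n → ℝ)
    (hb : ∀ i, 0 ≤ b i) (hc : ∀ i, 0 ≤ c i) :
    ((∀ ξ : ℝ, 0 < ξ →
        0 < c ⬝ᵥ ((exp (-ξ • A) - 1)⁻¹ : Matrix (Fin n) (Fin n) ℝ).mulVec b) ↔
      (∃ i j, 0 < c i ∧ 0 < b j ∧ (i = j ∨ HasWalk A i j))) ∧
    (¬ (∃ i j, 0 < c i ∧ 0 < b j ∧ (i = j ∨ HasWalk A i j)) →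
      ∀ ξ : ℝ, 0 < ξ →
        c ⬝ᵥ ((exp (-ξ • A) - 1)⁻¹ : Matrix (Fin n) (Fin n) ℝ).mulVec b = 0) := by
  by_cases hn : n = 0
  · subst hn
    constructor
    · constructor
      · intro h
        exfalso
        have h1 := h 1 one_pos
        simp [dotProduct] at h1
      · rintro ⟨i, -⟩
        exact i.elim0
    · intro _ ξ _
      simp [dotProduct]
  · have hn' : 0 < n := Nat.pos_of_ne_zero hn
    have hZ : ¬ (∃ i j, 0 < c i ∧ 0 < b j ∧ (i = j ∨ HasWalk A i j)) →
        ∀ ξ : ℝ, 0 < ξ →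
          c ⬝ᵥ ((exp (-ξ • A) - 1)⁻¹ : Matrix (Fin n) (Fin n) ℝ).mulVec b = 0 := by
      intro hP ξ hξ
      set R : Set (Fin n) := {q | ∃ i, 0 < c i ∧ (i = q ∨ HasWalk A i q)} with hR
      have hAR : ∀ p q, p ∈ R → q ∉ R → A p q = 0 := by
        intro p q hp hq
        by_contra hne
        have hpq : p ≠ q := fun h => hq (h ▸ hp)
        have hpos : 0 < A p q := lt_of_le_of_ne (hM p q hpq) (Ne.symm hne)
        obtain ⟨i, hci, hw⟩ := hp
        exact hq ⟨i, hci, Or.inr (WalkAux.walk_comp hw hpos)⟩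
      have hbR : ∀ q ∈ R, b q = 0 := by
        intro q hqR
        by_contra hbq
        obtain ⟨i, hci, hw⟩ := hqR
        exact hP ⟨i, q, hci, lt_of_le_of_ne (hb q) (Ne.symm hbq), hw⟩
      simp only [dotProduct, Matrix.mulVec]
      refine Finset.sum_eq_zero fun p _ => ?_
      rcases eq_or_lt_of_le (hc p) with hcp | hcp
      · rw [← hcp, zero_mul]
      · have hpR : p ∈ R := ⟨p, hcp, Or.inl rfl⟩
        have hinner : (∑ q, ((exp (-ξ • A) - 1)⁻¹ : Matrix (Fin n) (Fin n) ℝ) p q * b q)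
            = 0 := by
          refine Finset.sum_eq_zero fun q _ => ?_
          by_cases hqR : q ∈ R
          · rw [hbR q hqR, mul_zero]
          · rw [WalkAux.theta_entry_zero hH hξ R hAR hpR hqR, zero_mul]
        rw [hinner, mul_zero]
    refine ⟨⟨?_, ?_⟩, hZ⟩
    · intro h
      by_contra hP
      have h0 := hZ hP 1 one_pos
      have h1 := h 1 one_pos
      rw [h0] at h1
      exact lt_irrefl 0 h1
    · rintro ⟨i, j, hci, hbj, hw⟩ ξ hξ
      have hθge : ∀ p q : Fin n, exp (ξ • A) p q ≤
          ((exp (-ξ • A) - 1)⁻¹ : Matrix (Fin n) (Fin n) ℝ) p q :=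
        fun p q => WalkAux.theta_ge hM hH hn' hξ p q
      have hθnn : ∀ p q : Fin n,
          0 ≤ ((exp (-ξ • A) - 1)⁻¹ : Matrix (Fin n) (Fin n) ℝ) p q :=
        fun p q => le_trans (WalkAux.exp_smul_entry_nonneg hM hξ.le p q) (hθge p q)
      simp only [dotProduct, Matrix.mulVec]
      refine Finset.sum_pos' (fun p _ => mul_nonneg (hc p) ?_) ⟨i, Finset.mem_univ i, ?_⟩
      · exact Finset.sum_nonneg fun q _ => mul_nonneg (hθnn p q) (hb q)
      · refine mul_pos hci ?_
        refine lt_of_lt_of_le ?_ (Finset.single_le_sum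
          (f := fun q => ((exp (-ξ • A) - 1)⁻¹ : Matrix (Fin n) (Fin n) ℝ) i q * b q)
          (fun q _ => mul_nonneg (hθnn i q) (hb q)) (Finset.mem_univ j))
        exact mul_pos (lt_of_lt_of_le (WalkAux.exp_smul_entry_pos hM hξ hw) (hθge i j)) hbj
end

section
/- For every ξ > 0, all m entries of the column vector (exp(−ξA) − I)^{−1} B are strictly positive. -/
open Matrix NormedSpace

/-- The `m×m` matrix with diagonal entries `-a i`, subdiagonal entries `g i`, zero elsewhere. -/
def igoA (m : ℕ) (a : Fin m → ℝ) (g : Fin (m - 1) → ℝ) : Matrix (Fin m) (Fin m) ℝ :=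
  fun i j =>
    if i = j then -a i
    else if h : (i : ℕ) = (j : ℕ) + 1 then g ⟨(j : ℕ), by have := i.isLt; omega⟩
    else 0

/-- The first standard basis vector `e₁` of `ℝ^m`. -/
def igoB (m : ℕ) : Fin m → ℝ := fun i => if (i : ℕ) = 0 then 1 else 0

namespace IgoAux

variable {m : ℕ}

/-- entries of powers of an entrywise-nonnegative matrix are nonnegative -/
lemma pow_nonneg {Q : Matrix (Fin m) (Fin m) ℝ} (h : ∀ i j, 0 ≤ Q i j) :
    ∀ n, ∀ i j, 0 ≤ (Q ^ n) i j := by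
  intro n
  induction n with
  | zero =>
    intro i j
    simp only [pow_zero, Matrix.one_apply]
    split <;> norm_num
  | succ n ih =>
    intro i j
    rw [pow_succ, Matrix.mul_apply]
    exact Finset.sum_nonneg fun l _ => mul_nonneg (ih i l) (h l j)

/-- powers of a lower-triangular matrix are lower triangular -/
lemma pow_upper {Q : Matrix (Fin m) (Fin m) ℝ} (h : ∀ i j : Fin m, (i : ℕ) < j → Q i j = 0) :
    ∀ n, ∀ i j : Fin m, (i : ℕ) < j → (Q ^ n) i j = 0 := by
  intro n
  induction n with
  | zero =>
    intro i j hij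
    rw [pow_zero, Matrix.one_apply_ne (by intro hh; rw [hh] at hij; omega)]
  | succ n ih =>
    intro i j hij
    rw [pow_succ, Matrix.mul_apply]
    apply Finset.sum_eq_zero
    intro l _
    rcases lt_or_ge (i : ℕ) (l : ℕ) with hl | hl
    · rw [ih i l hl, zero_mul]
    · rw [h l j (lt_of_le_of_lt hl hij), mul_zero]

/-- diagonal entries of powers of a lower triangular matrix -/
lemma pow_diag {Q : Matrix (Fin m) (Fin m) ℝ} (h : ∀ i j : Fin m, (i : ℕ) < j → Q i j = 0) :
    ∀ n, ∀ i, (Q ^ n) i i = (Q i i) ^ n := by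
  intro n
  induction n with
  | zero => intro i; simp
  | succ n ih =>
    intro i
    rw [pow_succ, pow_succ, Matrix.mul_apply, ← ih i]
    apply Finset.sum_eq_single i
    · intro l _ hl
      rcases lt_or_ge (i : ℕ) (l : ℕ) with h1 | h1
      · rw [pow_upper h n i l h1, zero_mul]
      · have : (l : ℕ) < i := lt_of_le_of_ne h1 (by simpa [Fin.ext_iff] using hl)
        rw [h l i this, mul_zero]
    · intro hh; exact absurd (Finset.mem_univ i) hh

/-- the `(j+n, j)` entry of `Q^n` is positive for nonnegative lower-triangular `Q`
with positive subdiagonal -/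
lemma pow_sub_pos {Q : Matrix (Fin m) (Fin m) ℝ} (hnn : ∀ i j, 0 ≤ Q i j)
    (hsub : ∀ i j : Fin m, (i : ℕ) = (j : ℕ) + 1 → 0 < Q i j) :
    ∀ n, ∀ i j : Fin m, (i : ℕ) = (j : ℕ) + n → 0 < (Q ^ n) i j := by
  intro n
  induction n with
  | zero =>
    intro i j hij
    have : i = j := Fin.ext (by omega)
    rw [pow_zero, this, Matrix.one_apply_eq]
    norm_num
  | succ n ih =>
    intro i j hij
    have hj1 : (j : ℕ) + n < m := by have := i.isLt; omega
    set j1 : Fin m := ⟨(j : ℕ) + n, hj1⟩ with hj1def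
    rw [pow_succ', Matrix.mul_apply]
    have hterm : 0 < Q i j1 * (Q ^ n) j1 j :=
      mul_pos (hsub i j1 (by simp only [hj1def, Fin.val_mk]; omega)) (ih j1 j rfl)
    calc (0:ℝ) < Q i j1 * (Q ^ n) j1 j := hterm
    _ ≤ ∑ l, Q i l * (Q ^ n) l j := by
        apply Finset.single_le_sum (f := fun l => Q i l * (Q ^ n) l j)
          (fun l _ => mul_nonneg (hnn i l) (pow_nonneg (fun i j => hnn i j) n l j))
          (Finset.mem_univ j1)


lemma summable_exp (Q : Matrix (Fin m) (Fin m) ℝ) :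
    Summable fun n : ℕ => ((n.factorial : ℝ)⁻¹) • Q ^ n := by
  letI : SeminormedRing (Matrix (Fin m) (Fin m) ℝ) := Matrix.linftyOpSemiNormedRing
  letI : NormedRing (Matrix (Fin m) (Fin m) ℝ) := Matrix.linftyOpNormedRing
  letI : NormedAlgebra ℝ (Matrix (Fin m) (Fin m) ℝ) := Matrix.linftyOpNormedAlgebra
  exact expSeries_summable' (𝕂 := ℝ) Q

lemma summable_entry (Q : Matrix (Fin m) (Fin m) ℝ) (i j : Fin m) :
    Summable fun n : ℕ => ((n.factorial : ℝ)⁻¹) * (Q ^ n) i j := by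
  have hs := summable_exp Q
  have h1 := Pi.summable.mp (Pi.summable.mp hs i) j
  simpa [Matrix.smul_apply, smul_eq_mul] using h1

lemma exp_entry (Q : Matrix (Fin m) (Fin m) ℝ) (i j : Fin m) :
    NormedSpace.exp Q i j = ∑' n : ℕ, ((n.factorial : ℝ)⁻¹) * (Q ^ n) i j := by
  have hs := summable_exp Q
  rw [exp_eq_tsum ℝ]
  change (∑' n : ℕ, ((n.factorial : ℝ))⁻¹ • Q ^ n) i j = _
  erw [tsum_apply hs, tsum_apply (Pi.summable.mp hs i)]
  exact tsum_congr fun n => by simp [Matrix.smul_apply, smul_eq_mul]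

lemma exp_upper {Q : Matrix (Fin m) (Fin m) ℝ} (h : ∀ i j : Fin m, (i : ℕ) < j → Q i j = 0)
    {i j : Fin m} (hij : (i : ℕ) < j) : NormedSpace.exp Q i j = 0 := by
  rw [exp_entry]
  have : ∀ n : ℕ, ((n.factorial : ℝ)⁻¹) * (Q ^ n) i j = 0 := fun n => by
    rw [pow_upper h n i j hij, mul_zero]
  rw [tsum_congr this, tsum_zero]

lemma exp_pos {Q : Matrix (Fin m) (Fin m) ℝ} (hnn : ∀ i j, 0 ≤ Q i j)
    (hsub : ∀ i j : Fin m, (i : ℕ) = (j : ℕ) + 1 → 0 < Q i j)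
    {i j : Fin m} (hij : (j : ℕ) ≤ i) : 0 < NormedSpace.exp Q i j := by
  rw [exp_entry]
  have hpos : 0 < ((((i : ℕ) - (j : ℕ)).factorial : ℝ))⁻¹ * (Q ^ ((i : ℕ) - (j : ℕ))) i j :=
    mul_pos (by positivity) (pow_sub_pos hnn hsub _ i j (by omega))
  refine lt_of_lt_of_le hpos (Summable.le_tsum (summable_entry Q i j) _ fun k _ => ?_)
  exact mul_nonneg (by positivity) (pow_nonneg hnn k i j)

lemma exp_diag {Q : Matrix (Fin m) (Fin m) ℝ} (h : ∀ i j : Fin m, (i : ℕ) < j → Q i j = 0)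
    (i : Fin m) : NormedSpace.exp Q i i = Real.exp (Q i i) := by
  rw [exp_entry]
  have : ∀ n : ℕ, ((n.factorial : ℝ)⁻¹) * (Q ^ n) i i = ((n.factorial : ℝ)⁻¹) • (Q i i) ^ n := fun n => by
    rw [pow_diag h n i, smul_eq_mul]
  rw [tsum_congr this, Real.exp_eq_exp_ℝ, exp_eq_tsum ℝ]

lemma exp_shift (Q : Matrix (Fin m) (Fin m) ℝ) (c : ℝ) :
    NormedSpace.exp Q = Real.exp (-c) • NormedSpace.exp (Q + c • (1 : Matrix (Fin m) (Fin m) ℝ)) := by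
  have hcomm : Commute ((-c) • (1 : Matrix (Fin m) (Fin m) ℝ)) (Q + c • 1) :=
    (Commute.one_left _).smul_left _
  have h1 : Q = (-c) • (1 : Matrix (Fin m) (Fin m) ℝ) + (Q + c • 1) := by
    rw [neg_smul]; abel
  have h2 : NormedSpace.exp ((-c) • (1 : Matrix (Fin m) (Fin m) ℝ)) = Real.exp (-c) • 1 := by
    rw [Matrix.smul_one_eq_diagonal, Matrix.exp_diagonal]
    have he : NormedSpace.exp (fun _ : Fin m => -c) = fun _ : Fin m => Real.exp (-c) := by
      funext i
      rw [Pi.coe_exp, Real.exp_eq_exp_ℝ]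
    rw [he, ← Matrix.smul_one_eq_diagonal]
  calc NormedSpace.exp Q = NormedSpace.exp ((-c) • (1 : Matrix (Fin m) (Fin m) ℝ) + (Q + c • 1)) := by rw [← h1]
  _ = NormedSpace.exp ((-c) • (1 : Matrix (Fin m) (Fin m) ℝ)) * NormedSpace.exp (Q + c • 1) :=
      Matrix.exp_add_of_commute _ _ hcomm
  _ = Real.exp (-c) • NormedSpace.exp (Q + c • 1) := by rw [h2, smul_mul_assoc, one_mul]

end IgoAux

theorem stmt3 (m : ℕ) (hm : 1 ≤ m) (a : Fin m → ℝ) (g : Fin (m - 1) → ℝ)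
    (ha : ∀ i, 0 < a i) (hg : ∀ i, 0 < g i) (ξ : ℝ) (hξ : 0 < ξ) :
    ∀ i, 0 < ((NormedSpace.exp (-ξ • igoA m a g) - 1)⁻¹ :
      Matrix (Fin m) (Fin m) ℝ).mulVec (igoB m) i := by
  classical
  have hm0 : 0 < m := hm
  obtain ⟨c, hca⟩ : ∃ c, ∀ i, ξ * a i ≤ c :=
    ⟨ξ * (Finset.univ.sup' ⟨⟨0, hm0⟩, Finset.mem_univ _⟩ a), fun i =>
      mul_le_mul_of_nonneg_left (Finset.le_sup' a (Finset.mem_univ i)) hξ.le⟩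
  set S : Matrix (Fin m) (Fin m) ℝ := ξ • igoA m a g with hSdef
  set R : Matrix (Fin m) (Fin m) ℝ := S + c • 1 with hRdef
  set P : Matrix (Fin m) (Fin m) ℝ := NormedSpace.exp S with hPdef
  -- entries of R
  have hRval : ∀ i j : Fin m,
      R i j = if i = j then c - ξ * a i
        else if h : (i : ℕ) = (j : ℕ) + 1 then ξ * g ⟨(j : ℕ), by have := i.isLt; omega⟩
        else 0 := by
    intro i j
    rw [hRdef, hSdef]
    simp only [Matrix.add_apply, Matrix.smul_apply, Matrix.one_apply, smul_eq_mul, igoA]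
    by_cases hij : i = j
    · simp [hij]; ring
    · by_cases h2 : (i : ℕ) = (j : ℕ) + 1
      · simp [hij, h2]
      · simp [hij, h2]
  have hR0 : ∀ i j : Fin m, (i : ℕ) < j → R i j = 0 := by
    intro i j h
    rw [hRval, if_neg (by intro hh; rw [hh] at h; omega), dif_neg (by omega)]
  have hRnn : ∀ i j : Fin m, 0 ≤ R i j := by
    intro i j
    rw [hRval]
    split_ifs with h1 h2
    · have := hca i; subst h1; linarith
    · exact le_of_lt (mul_pos hξ (hg _))
    · exact le_refl 0
  have hRsub : ∀ i j : Fin m, (i : ℕ) = (j : ℕ) + 1 → 0 < R i j := by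
    intro i j h
    rw [hRval, if_neg (by intro hh; rw [hh] at h; omega), dif_pos h]
    exact mul_pos hξ (hg _)
  have hRdiag : ∀ i : Fin m, R i i = c - ξ * a i := fun i => by rw [hRval, if_pos rfl]
  -- entries of P
  have hPshift : P = Real.exp (-c) • NormedSpace.exp R := by
    rw [hPdef, hRdef]; exact IgoAux.exp_shift S c
  have hPupper : ∀ i j : Fin m, (i : ℕ) < j → P i j = 0 := by
    intro i j h
    rw [hPshift, Matrix.smul_apply, IgoAux.exp_upper hR0 h, smul_zero]
  have hPpos : ∀ i j : Fin m, (j : ℕ) ≤ i → 0 < P i j := by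
    intro i j h
    rw [hPshift, Matrix.smul_apply, smul_eq_mul]
    exact mul_pos (Real.exp_pos _) (IgoAux.exp_pos hRnn hRsub h)
  have hPnn : ∀ i j : Fin m, 0 ≤ P i j := by
    intro i j
    rcases le_or_gt (j : ℕ) (i : ℕ) with h | h
    · exact le_of_lt (hPpos i j h)
    · rw [hPupper i j h]
  have hPdlt : ∀ i : Fin m, P i i < 1 := by
    intro i
    rw [hPshift, Matrix.smul_apply, smul_eq_mul, IgoAux.exp_diag hR0, hRdiag, ← Real.exp_add]
    rw [show -c + (c - ξ * a i) = -(ξ * a i) by ring, ← Real.exp_zero]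
    exact Real.exp_lt_exp.mpr (by nlinarith [mul_pos hξ (ha i)])
  -- the matrix in the statement
  set E : Matrix (Fin m) (Fin m) ℝ := NormedSpace.exp (-ξ • igoA m a g) with hEdef
  have hES : E = NormedSpace.exp (-S) := by rw [hEdef, hSdef, neg_smul]
  have hEP : E * P = 1 := by
    rw [hES, hPdef, ← Matrix.exp_add_of_commute _ _ (Commute.refl S).neg_left,
      neg_add_cancel, exp_zero]
  have hPE : P * E = 1 := by
    rw [hES, hPdef, ← Matrix.exp_add_of_commute _ _ (Commute.refl S).neg_right,
      add_neg_cancel, exp_zero]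
  -- determinants
  have hdet1P : IsUnit (1 - P).det := by
    have htri : (1 - P).BlockTriangular OrderDual.toDual := by
      intro i j hij
      have h1 : (i : ℕ) < j := hij
      have h2 : i ≠ j := by intro hh; rw [hh] at h1; omega
      rw [Matrix.sub_apply, Matrix.one_apply_ne h2, hPupper i j h1, sub_zero]
    rw [Matrix.det_of_lowerTriangular _ htri]
    rw [isUnit_iff_ne_zero]
    have : 0 < ∏ i : Fin m, (1 - P) i i := by
      apply Finset.prod_pos
      intro i _
      rw [Matrix.sub_apply, Matrix.one_apply_eq]
      have := hPdlt i; linarith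
    exact ne_of_gt this
  have hdetE : IsUnit E.det := Matrix.isUnit_det_of_right_inverse hEP
  have hMfact : E - 1 = E * (1 - P) := by rw [Matrix.mul_sub, mul_one, hEP]
  have hdetM : IsUnit (E - 1).det := by
    rw [hMfact, Matrix.det_mul]; exact hdetE.mul hdet1P
  set x : Fin m → ℝ := (E - 1)⁻¹.mulVec (igoB m) with hxdef
  have hx : (E - 1).mulVec x = igoB m := by
    rw [hxdef, Matrix.mulVec_mulVec, Matrix.mul_nonsing_inv _ hdetM, Matrix.one_mulVec]
  have h6 : (1 - P).mulVec x = P.mulVec (igoB m) := by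
    have h5 : P * (E - 1) = 1 - P := by rw [Matrix.mul_sub, mul_one, hPE]
    rw [← h5, ← Matrix.mulVec_mulVec, hx]
  have h7 : ∀ i, x i - P.mulVec x i = P.mulVec (igoB m) i := by
    intro i
    have := congrFun h6 i
    rwa [Matrix.sub_mulVec, Matrix.one_mulVec, Pi.sub_apply] at this
  have h8 : ∀ i, P.mulVec (igoB m) i = P i ⟨0, hm0⟩ := by
    intro i
    rw [Matrix.mulVec, dotProduct]
    rw [Finset.sum_eq_single (⟨0, hm0⟩ : Fin m)]
    · simp [igoB]
    · intro b _ hb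
      have hb0 : (b : ℕ) ≠ 0 := fun h => hb (Fin.ext h)
      simp [igoB, hb0]
    · intro h; exact absurd (Finset.mem_univ _) h
  have key : ∀ n : ℕ, ∀ i : Fin m, (i : ℕ) = n → 0 < x i := by
    intro n
    induction n using Nat.strong_induction_on with
    | _ n IH =>
      intro i hi
      have h9 := h7 i
      rw [h8 i] at h9
      have hsum : P.mulVec x i = P i i * x i + ∑ j ∈ Finset.univ.erase i, P i j * x j := by
        rw [Matrix.mulVec, dotProduct, ← Finset.add_sum_erase _ _ (Finset.mem_univ i)]
      rw [hsum] at h9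
      have heq : x i * (1 - P i i) = P i ⟨0, hm0⟩ + ∑ j ∈ Finset.univ.erase i, P i j * x j := by
        linear_combination h9
      have hpos : 0 < P i ⟨0, hm0⟩ + ∑ j ∈ Finset.univ.erase i, P i j * x j := by
        apply add_pos_of_pos_of_nonneg
        · exact hPpos i ⟨0, hm0⟩ (Nat.zero_le _)
        · apply Finset.sum_nonneg
          intro j hj
          have hji : j ≠ i := Finset.ne_of_mem_erase hj
          rcases lt_or_ge (j : ℕ) (i : ℕ) with h1 | h1
          · exact mul_nonneg (hPnn i j) (le_of_lt (IH (j : ℕ) (hi ▸ h1) j rfl))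
          · have h2 : (i : ℕ) < j := lt_of_le_of_ne h1 fun h => hji (Fin.ext h.symm)
            rw [hPupper i j h2, zero_mul]
      have hd : 0 < 1 - P i i := by have := hPdlt i; linarith
      nlinarith [heq, hpos, hd]
  exact fun i => key (i : ℕ) i rfl
end

section
/- Suppose m ≥ 1 is arbitrary, F is non-increasing, Φ is non-decreasing, and (m − 1)/min_i a_i ≤ Φ₁. Then the function R is non-increasing on [0,∞), and the equation of periods y = R(y) has exactly one solution in [0,∞), which is strictly positive. -/
open Matrix NormedSpace

/-- The last standard basis vector `e_m` of `ℝ^m` (acting as the row `C = e_mᵀ`). -/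
def igoC (m : ℕ) : Fin m → ℝ := fun i => if (i : ℕ) = m - 1 then 1 else 0

/-- The function `R(y) = F(y) · C (exp(−Φ(y)A) − I)⁻¹ B` of the equation of periods. -/
noncomputable def igoR (m : ℕ) (a : Fin m → ℝ) (g : Fin (m - 1) → ℝ)
    (Φ F : ℝ → ℝ) (y : ℝ) : ℝ :=
  F y * (igoC m ⬝ᵥ ((exp (-(Φ y) • igoA m a g) - 1)⁻¹ :
    Matrix (Fin m) (Fin m) ℝ).mulVec (igoB m))

variable {m : ℕ}

lemma hasDerivAt_exp_entry (A : Matrix (Fin m) (Fin m) ℝ) (i j : Fin m) (t : ℝ) :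
    HasDerivAt (fun t : ℝ => exp (t • A) i j) ((A * exp (t • A)) i j) t := by
  letI : SeminormedRing (Matrix (Fin m) (Fin m) ℝ) := Matrix.linftyOpSemiNormedRing
  letI : NormedRing (Matrix (Fin m) (Fin m) ℝ) := Matrix.linftyOpNormedRing
  letI : NormedAlgebra ℝ (Matrix (Fin m) (Fin m) ℝ) := Matrix.linftyOpNormedAlgebra
  have h := hasDerivAt_exp_smul_const' (𝕂 := ℝ) A t
  let L : Matrix (Fin m) (Fin m) ℝ →ₗ[ℝ] ℝ :=
    { toFun := fun M => M i j, map_add' := fun _ _ => rfl, map_smul' := fun _ _ => rfl }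
  have := (LinearMap.toContinuousLinearMap L).hasFDerivAt.comp_hasDerivAt t h
  exact this

lemma igoA_apply_zero (a : Fin m → ℝ) (g : Fin (m-1) → ℝ) {i j : Fin m}
    (h1 : (i : ℕ) ≠ j) (h2 : (i : ℕ) ≠ (j : ℕ) + 1) : igoA m a g i j = 0 := by
  simp only [igoA]
  rw [if_neg (fun h => h1 (by rw [h])), dif_neg h2]

lemma igoA_diag (a : Fin m → ℝ) (g : Fin (m-1) → ℝ) (i : Fin m) :
    igoA m a g i i = -a i := by simp [igoA]

lemma igoA_sub (a : Fin m → ℝ) (g : Fin (m-1) → ℝ) (k : ℕ) (hk : k + 1 < m) :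
    igoA m a g ⟨k+1, hk⟩ ⟨k, by omega⟩ = g ⟨k, by omega⟩ := by
  simp only [igoA]
  rw [if_neg (by simp [Fin.ext_iff])]
  simp

lemma igoA_row0 (hm : 0 < m) (a : Fin m → ℝ) (g : Fin (m-1) → ℝ)
    (M : Matrix (Fin m) (Fin m) ℝ) (j : Fin m) :
    (igoA m a g * M) ⟨0, hm⟩ j = -a ⟨0, hm⟩ * M ⟨0, hm⟩ j := by
  rw [Matrix.mul_apply]
  rw [Finset.sum_eq_single (⟨0, hm⟩ : Fin m)]
  · rw [igoA_diag]
  · intro b _ hb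
    have hb' : (b : ℕ) ≠ 0 := fun h => hb (Fin.ext h)
    rw [igoA_apply_zero a g (by simpa using hb'.symm) (by simp), zero_mul]
  · exact fun h => absurd (Finset.mem_univ _) h

lemma igoA_rowSucc (a : Fin m → ℝ) (g : Fin (m-1) → ℝ) (k : ℕ) (hk : k + 1 < m)
    (M : Matrix (Fin m) (Fin m) ℝ) (j : Fin m) :
    (igoA m a g * M) ⟨k+1, hk⟩ j
      = g ⟨k, by omega⟩ * M ⟨k, by omega⟩ j + -a ⟨k+1, hk⟩ * M ⟨k+1, hk⟩ j := by
  rw [Matrix.mul_apply]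
  have hsub : ({⟨k, by omega⟩, ⟨k+1, hk⟩} : Finset (Fin m)) ⊆ Finset.univ :=
    Finset.subset_univ _
  rw [← Finset.sum_subset hsub]
  · rw [Finset.sum_pair (by simp [Fin.ext_iff])]
    rw [igoA_sub a g k hk, igoA_diag]
  · intro x _ hx
    simp only [Finset.mem_insert, Finset.mem_singleton, Fin.ext_iff] at hx
    push_neg at hx
    obtain ⟨h1, h2⟩ := hx
    rw [igoA_apply_zero a g (by simp; omega) (by simp; omega), zero_mul]

lemma igoA_apply_succ (a : Fin m → ℝ) (g : Fin (m-1) → ℝ) {i j : Fin m}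
    (h : (i : ℕ) = (j : ℕ) + 1) : igoA m a g i j = g ⟨(j : ℕ), by have := i.isLt; omega⟩ := by
  simp only [igoA]
  rw [if_neg (by intro hij; rw [hij] at h; omega), dif_pos h]

noncomputable def igoU (a : Fin m → ℝ) (g : Fin (m-1) → ℝ) (k : Fin m) (t : ℝ) : ℝ :=
  exp (t • igoA m a g) k ⟨0, k.pos⟩

lemma igoU_continuous (a : Fin m → ℝ) (g : Fin (m-1) → ℝ) (k : Fin m) :
    Continuous (igoU a g k) :=
  continuous_iff_continuousAt.2 fun t =>
    (hasDerivAt_exp_entry (igoA m a g) k ⟨0, k.pos⟩ t).continuousAt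

lemma igoU_zero (a : Fin m → ℝ) (g : Fin (m-1) → ℝ) (k : Fin m) :
    igoU a g k 0 = if (k : ℕ) = 0 then 1 else 0 := by
  simp only [igoU, zero_smul, exp_zero, Matrix.one_apply, Fin.ext_iff]

lemma igoU_hasDerivAt_zero (hm : 0 < m) (a : Fin m → ℝ) (g : Fin (m-1) → ℝ) (t : ℝ) :
    HasDerivAt (igoU a g ⟨0, hm⟩) (-a ⟨0, hm⟩ * igoU a g ⟨0, hm⟩ t) t := by
  have h := hasDerivAt_exp_entry (igoA m a g) ⟨0, hm⟩ ⟨0, (⟨0, hm⟩ : Fin m).pos⟩ t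
  rwa [igoA_row0 hm a g] at h

lemma igoU_hasDerivAt_succ (a : Fin m → ℝ) (g : Fin (m-1) → ℝ) (k : ℕ) (hk : k + 1 < m) (t : ℝ) :
    HasDerivAt (igoU a g ⟨k+1, hk⟩)
      (g ⟨k, by omega⟩ * igoU a g ⟨k, by omega⟩ t + -a ⟨k+1, hk⟩ * igoU a g ⟨k+1, hk⟩ t) t := by
  have h := hasDerivAt_exp_entry (igoA m a g) ⟨k+1, hk⟩ ⟨0, (⟨k+1, hk⟩ : Fin m).pos⟩ t
  rw [igoA_rowSucc a g k hk] at h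
  exact h

lemma igoU_zero_explicit (hm : 0 < m) (a : Fin m → ℝ) (g : Fin (m-1) → ℝ) (t : ℝ) :
    igoU a g ⟨0, hm⟩ t = Real.exp (-a ⟨0, hm⟩ * t) := by
  have key : ∀ s : ℝ, igoU a g ⟨0, hm⟩ s * Real.exp (a ⟨0, hm⟩ * s) = 1 := by
    have hD : ∀ s : ℝ, HasDerivAt (fun s => igoU a g ⟨0, hm⟩ s * Real.exp (a ⟨0, hm⟩ * s)) 0 s := by
      intro s
      have h1 := igoU_hasDerivAt_zero hm a g s
      have h2 : HasDerivAt (fun s : ℝ => Real.exp (a ⟨0, hm⟩ * s))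
          (a ⟨0, hm⟩ * Real.exp (a ⟨0, hm⟩ * s)) s := by
        have := (((hasDerivAt_id s).const_mul (a ⟨0, hm⟩)).exp)
        simpa [mul_comm] using this
      have := h1.fun_mul h2
      exact this.congr_deriv (by ring)
    have hconst : ∀ s : ℝ, (fun s => igoU a g ⟨0, hm⟩ s * Real.exp (a ⟨0, hm⟩ * s)) s
        = (fun s => igoU a g ⟨0, hm⟩ s * Real.exp (a ⟨0, hm⟩ * s)) 0 := by
      intro s
      exact is_const_of_deriv_eq_zero (fun x => (hD x).differentiableAt)
        (fun x => (hD x).deriv) s 0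
    intro s
    have := hconst s
    simp only [] at this
    rw [this]
    simp [igoU_zero]
  have h := key t
  have hexp : Real.exp (a ⟨0, hm⟩ * t) > 0 := Real.exp_pos _
  rw [neg_mul, Real.exp_neg]
  field_simp
  linarith [h]

lemma igoU_integral_rep (a : Fin m → ℝ) (g : Fin (m-1) → ℝ) (k : ℕ) (hk : k + 1 < m) (t : ℝ) :
    igoU a g ⟨k+1, hk⟩ t = Real.exp (-(a ⟨k+1, hk⟩ * t)) *
      (g ⟨k, by omega⟩ * ∫ s in (0:ℝ)..t, Real.exp (a ⟨k+1, hk⟩ * s) * igoU a g ⟨k, by omega⟩ s) := by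
  set a' := a ⟨k+1, hk⟩
  set γ := g (⟨k, by omega⟩ : Fin (m-1))
  set u := igoU a g (⟨k, by omega⟩ : Fin m)
  set v := igoU a g (⟨k+1, hk⟩ : Fin m)
  have hG : ∀ s : ℝ, HasDerivAt (fun s => Real.exp (a' * s) * v s)
      (Real.exp (a' * s) * (γ * u s)) s := by
    intro s
    have h2 : HasDerivAt (fun s : ℝ => Real.exp (a' * s)) (a' * Real.exp (a' * s)) s := by
      have := (((hasDerivAt_id s).const_mul a').exp)
      simpa [mul_comm] using this
    have h1 := igoU_hasDerivAt_succ a g k hk s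
    have := h2.fun_mul h1
    exact this.congr_deriv (by simp only [u, v, γ, a']; ring)
  have hint : IntervalIntegrable (fun s => Real.exp (a' * s) * (γ * u s)) MeasureTheory.volume 0 t :=
    (((Real.continuous_exp.comp (continuous_const.mul continuous_id)).mul
      (continuous_const.mul (igoU_continuous a g _)))).intervalIntegrable 0 t
  have := intervalIntegral.integral_eq_sub_of_hasDerivAt (fun s _ => hG s) hint
  have hv0 : v 0 = 0 := by
    rw [show v 0 = igoU a g ⟨k+1, hk⟩ 0 from rfl, igoU_zero]; simp
  rw [hv0] at this
  simp only [mul_zero, sub_zero, Real.exp_zero] at this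
  have hrw : (∫ s in (0:ℝ)..t, Real.exp (a' * s) * (γ * u s))
      = γ * ∫ s in (0:ℝ)..t, Real.exp (a' * s) * u s := by
    rw [← intervalIntegral.integral_const_mul]
    congr 1; ext s; ring
  rw [hrw] at this
  rw [this, Real.exp_neg]
  field_simp

lemma igoU_main (a : Fin m → ℝ) (g : Fin (m-1) → ℝ)
    (ha : ∀ i, 0 < a i) (hg : ∀ i, 0 < g i) (α : ℝ) (hαa : ∀ i, α ≤ a i) :
    ∀ k : ℕ, ∀ hk : k < m,
      (∀ t : ℝ, 0 ≤ t → 0 ≤ igoU a g ⟨k, hk⟩ t) ∧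
      (∀ t : ℝ, 0 < t → 0 < igoU a g ⟨k, hk⟩ t) ∧
      (∀ s t : ℝ, 0 ≤ s → s ≤ t →
        igoU a g ⟨k, hk⟩ t * Real.exp (α*t) * s^k
          ≤ igoU a g ⟨k, hk⟩ s * Real.exp (α*s) * t^k) := by
  intro k
  induction k with
  | zero =>
    intro hk
    refine ⟨fun t _ => by rw [igoU_zero_explicit hk]; positivity,
      fun t _ => by rw [igoU_zero_explicit hk]; positivity, fun s t h0s hst => ?_⟩
    rw [igoU_zero_explicit hk, igoU_zero_explicit hk]
    simp only [pow_zero, mul_one]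
    rw [← Real.exp_add, ← Real.exp_add]
    have := hαa (⟨0, hk⟩ : Fin m)
    exact Real.exp_le_exp.2 (by nlinarith)
  | succ k IH =>
    intro hk
    have hk' : k < m := by omega
    obtain ⟨IH1, IH2, IH3⟩ := IH hk'
    set a' := a ⟨k+1, hk⟩ with ha'
    set γ := g (⟨k, by omega⟩ : Fin (m-1)) with hγ
    set u : ℝ → ℝ := igoU a g ⟨k, hk'⟩ with hu
    set v : ℝ → ℝ := igoU a g ⟨k+1, hk⟩ with hv
    have hucont : Continuous u := igoU_continuous a g _
    have hγpos : 0 < γ := hg _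
    have ha'pos : 0 < a' := ha _
    have hαa' : α ≤ a' := hαa _
    have rep : ∀ t : ℝ, v t = Real.exp (-(a' * t)) *
        (γ * ∫ s in (0:ℝ)..t, Real.exp (a' * s) * u s) := fun t =>
      igoU_integral_rep a g k hk t
    have hint : ∀ b c : ℝ, IntervalIntegrable (fun s => Real.exp (a' * s) * u s)
        MeasureTheory.volume b c := fun b c =>
      ((Real.continuous_exp.comp (continuous_const.mul continuous_id)).mul
        hucont).intervalIntegrable b c
    have P1 : ∀ t : ℝ, 0 ≤ t → 0 ≤ v t := by
      intro t ht
      rw [rep t]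
      have : 0 ≤ ∫ s in (0:ℝ)..t, Real.exp (a' * s) * u s :=
        intervalIntegral.integral_nonneg ht
          (fun x hx => mul_nonneg (Real.exp_pos _).le (IH1 x hx.1))
      positivity
    refine ⟨P1, ?_, ?_⟩
    · intro t ht
      rw [rep t]
      have : 0 < ∫ s in (0:ℝ)..t, Real.exp (a' * s) * u s :=
        intervalIntegral.intervalIntegral_pos_of_pos_on (hint 0 t)
          (fun x hx => mul_pos (Real.exp_pos _) (IH2 x hx.1)) ht
      positivity
    · intro s t h0s hst
      rcases h0s.eq_or_lt with h0 | h0s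
      · rw [← h0]
        have hv0 : v 0 = 0 := by rw [hv, igoU_zero]; simp
        rw [hv0]
        simp [zero_pow (Nat.succ_ne_zero k)]
      · have ht0 : 0 < t := lt_of_lt_of_le h0s hst
        set lam := t / s with hlam
        have hlam1 : 1 ≤ lam := (one_le_div h0s).2 hst
        have hlam0 : 0 < lam := lt_of_lt_of_le one_pos hlam1
        have ht_eq : t = lam * s := by rw [hlam, div_mul_cancel₀ t h0s.ne']
        -- pointwise bound (†)
        have dagger : ∀ τ ∈ Set.Icc (0:ℝ) s,
            Real.exp (-(a'*t)) * (Real.exp (a' * (lam * τ)) * u (lam * τ))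
              ≤ Real.exp (α*(s-t)) * Real.exp (-(a'*s)) * lam^k *
                (Real.exp (a' * τ) * u τ) := by
          intro τ hτ
          obtain ⟨hτ0, hτs⟩ := hτ
          -- step 1 : exp (a' λ τ) * u (λτ) ≤ λ^k * exp ((a'λ + α - αλ)τ) * u τ
          have step1 : Real.exp (a' * (lam * τ)) * u (lam * τ)
              ≤ lam^k * Real.exp ((a'*lam + α - α*lam)*τ) * u τ := by
            rcases hτ0.eq_or_lt with h0τ | hτpos
            · rw [← h0τ]
              simp only [mul_zero, zero_mul, Real.exp_zero, one_mul, mul_one]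
              nlinarith [IH1 0 le_rfl, one_le_pow₀ hlam1 (n := k)]
            · have h3 := IH3 τ (lam * τ) hτ0 (by nlinarith)
              have hexpid : Real.exp (a' * (lam*τ)) * Real.exp (α*τ)
                  = Real.exp ((a'*lam + α - α*lam)*τ) * Real.exp (α*(lam*τ)) := by
                rw [← Real.exp_add, ← Real.exp_add]
                ring_nf
              have h4 := mul_le_mul_of_nonneg_right h3 (Real.exp_pos (a'*(lam*τ))).le
              have hτk : (0:ℝ) < τ^k := pow_pos hτpos k
              rw [mul_pow] at h3
              -- goal * (exp(α λ τ) * τ^k) ≤ ... : use cancellation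
              rw [← mul_le_mul_iff_of_pos_right (mul_pos (Real.exp_pos (α*(lam*τ))) hτk)]
              calc Real.exp (a' * (lam * τ)) * u (lam * τ) * (Real.exp (α*(lam*τ)) * τ^k)
                  = (u (lam*τ) * Real.exp (α*(lam*τ)) * τ^k) * Real.exp (a'*(lam*τ)) := by ring
                _ ≤ (u τ * Real.exp (α*τ) * (lam*τ)^k) * Real.exp (a'*(lam*τ)) := h4
                _ = lam^k * Real.exp ((a'*lam + α - α*lam)*τ) * u τ *
                      (Real.exp (α*(lam*τ)) * τ^k) := by
                    rw [mul_pow]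
                    linear_combination (u τ * lam^k * τ^k) * hexpid
          -- step 2 : constants
          have hexp2 : Real.exp (-(a'*t)) * Real.exp ((a'*lam + α - α*lam)*τ)
              ≤ Real.exp (α*(s-t)) * Real.exp (-(a'*s)) * Real.exp (a' * τ) := by
            rw [← Real.exp_add, ← Real.exp_add, ← Real.exp_add]
            apply Real.exp_le_exp.2
            have hprod : 0 ≤ (a' - α) * ((lam - 1) * (s - τ)) :=
              mul_nonneg (by linarith) (mul_nonneg (by linarith) (by linarith))
            nlinarith [ht_eq]
          have huτ : 0 ≤ u τ := IH1 τ hτ0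
          calc Real.exp (-(a'*t)) * (Real.exp (a' * (lam * τ)) * u (lam * τ))
              ≤ Real.exp (-(a'*t)) * (lam^k * Real.exp ((a'*lam + α - α*lam)*τ) * u τ) := by
                exact mul_le_mul_of_nonneg_left step1 (Real.exp_pos _).le
            _ ≤ Real.exp (α*(s-t)) * Real.exp (-(a'*s)) * lam^k * (Real.exp (a' * τ) * u τ) := by
                have := mul_le_mul_of_nonneg_right hexp2 (mul_nonneg (le_of_lt (pow_pos hlam0 k)) huτ)
                calc Real.exp (-(a'*t)) * (lam^k * Real.exp ((a'*lam + α - α*lam)*τ) * u τ)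
                    = Real.exp (-(a'*t)) * Real.exp ((a'*lam + α - α*lam)*τ) * (lam^k * u τ) := by ring
                  _ ≤ Real.exp (α*(s-t)) * Real.exp (-(a'*s)) * Real.exp (a' * τ) * (lam^k * u τ) := this
                  _ = Real.exp (α*(s-t)) * Real.exp (-(a'*s)) * lam^k * (Real.exp (a' * τ) * u τ) := by ring
        have hcontL : Continuous (fun τ => Real.exp (-(a'*t)) * (Real.exp (a' * (lam * τ)) * u (lam * τ))) :=
          continuous_const.mul ((Real.continuous_exp.comp (continuous_const.mul
            (continuous_const.mul continuous_id))).mul (hucont.comp (continuous_const.mul continuous_id)))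
        have hcontR : Continuous (fun τ => Real.exp (α*(s-t)) * Real.exp (-(a'*s)) * lam^k *
            (Real.exp (a' * τ) * u τ)) :=
          continuous_const.mul ((Real.continuous_exp.comp (continuous_const.mul continuous_id)).mul hucont)
        have hIneq := intervalIntegral.integral_mono_on (μ := MeasureTheory.volume) h0s.le (hcontL.intervalIntegrable 0 s)
          (hcontR.intervalIntegrable 0 s) dagger
        rw [intervalIntegral.integral_const_mul, intervalIntegral.integral_const_mul] at hIneq
        have hsub : (∫ τ in (0:ℝ)..s, Real.exp (a' * (lam * τ)) * u (lam * τ))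
            = lam⁻¹ * ∫ σ in (0:ℝ)..t, Real.exp (a' * σ) * u σ := by
          have := intervalIntegral.integral_comp_mul_left
            (fun σ => Real.exp (a' * σ) * u σ) (a := 0) (b := s) (ne_of_gt hlam0)
          rw [this, mul_zero, ← ht_eq]
          simp [smul_eq_mul]
        rw [hsub] at hIneq
        have hmain : v t ≤ lam^(k+1) * (Real.exp (α*(s-t)) * v s) := by
          rw [rep t, rep s]
          have h5 := mul_le_mul_of_nonneg_left hIneq (le_of_lt (mul_pos hγpos hlam0))
          calc Real.exp (-(a'*t)) * (γ * ∫ σ in (0:ℝ)..t, Real.exp (a' * σ) * u σ)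
              = (γ * lam) * (Real.exp (-(a'*t)) * (lam⁻¹ * ∫ σ in (0:ℝ)..t, Real.exp (a' * σ) * u σ)) := by
                field_simp
            _ ≤ (γ * lam) * (Real.exp (α*(s-t)) * Real.exp (-(a'*s)) * lam^k *
                  ∫ σ in (0:ℝ)..s, Real.exp (a' * σ) * u σ) := h5
            _ = lam^(k+1) * (Real.exp (α*(s-t)) * (Real.exp (-(a'*s)) *
                  (γ * ∫ σ in (0:ℝ)..s, Real.exp (a' * σ) * u σ))) := by ring
        have hE : Real.exp (α*(s-t)) * Real.exp (α*t) = Real.exp (α*s) := by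
          rw [← Real.exp_add]; ring_nf
        have hP : lam^(k+1) * s^(k+1) = t^(k+1) := by rw [ht_eq, mul_pow]
        have hnn : (0:ℝ) ≤ Real.exp (α*t) * s^(k+1) :=
          mul_nonneg (Real.exp_pos _).le (pow_nonneg h0s.le _)
        calc v t * Real.exp (α*t) * s^(k+1)
            = v t * (Real.exp (α*t) * s^(k+1)) := by ring
          _ ≤ (lam^(k+1) * (Real.exp (α*(s-t)) * v s)) * (Real.exp (α*t) * s^(k+1)) :=
              mul_le_mul_of_nonneg_right hmain hnn
          _ = v s * Real.exp (α*s) * t^(k+1) := by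
              rw [← hE, ← hP]; ring

lemma igoA_split (a : Fin m → ℝ) (g : Fin (m-1) → ℝ) (c : ℝ) :
    igoA m a (c • g) = igoA m a 0 + c • igoA m (0 : Fin m → ℝ) g := by
  ext i j
  simp only [Matrix.add_apply, Matrix.smul_apply, smul_eq_mul]
  by_cases h1 : i = j
  · subst h1; rw [igoA_diag, igoA_diag, igoA_diag]; simp
  · by_cases h2 : (i : ℕ) = (j : ℕ) + 1
    · rw [igoA_apply_succ a _ h2, igoA_apply_succ a _ h2, igoA_apply_succ _ g h2]
      simp [igoA_diag]
    · have h1' : (i : ℕ) ≠ (j : ℕ) := fun h => h1 (Fin.ext h)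
      rw [igoA_apply_zero _ _ h1' h2, igoA_apply_zero _ _ h1' h2, igoA_apply_zero _ _ h1' h2]
      simp

lemma igoA_zero_g (a : Fin m → ℝ) :
    igoA m a 0 = Matrix.diagonal (fun i => -a i) := by
  ext i j
  by_cases h1 : i = j
  · subst h1; rw [igoA_diag, Matrix.diagonal_apply_eq]
  · rw [Matrix.diagonal_apply_ne _ h1]
    by_cases h2 : (i : ℕ) = (j : ℕ) + 1
    · rw [igoA_apply_succ _ _ h2]; simp
    · exact igoA_apply_zero _ _ (fun h => h1 (Fin.ext h)) h2

-- conjugation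
lemma igoA_conj (a : Fin m → ℝ) (g : Fin (m-1) → ℝ) (c : ℝ) (hc : c ≠ 0) :
    Matrix.diagonal (fun i : Fin m => (c⁻¹)^(i : ℕ)) * igoA m a (c • g) *
      Matrix.diagonal (fun i : Fin m => c^(i : ℕ)) = igoA m a g := by
  ext i j
  rw [Matrix.mul_diagonal, Matrix.diagonal_mul]
  by_cases h1 : i = j
  · subst h1
    rw [igoA_diag, igoA_diag]
    have hcc : (c⁻¹)^(i:ℕ) * c^(i:ℕ) = 1 := by rw [← mul_pow, inv_mul_cancel₀ hc, one_pow]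
    linear_combination (-a i) * hcc
  · by_cases h2 : (i : ℕ) = (j : ℕ) + 1
    · rw [igoA_apply_succ a _ h2, igoA_apply_succ a g h2]
      simp only [Pi.smul_apply, smul_eq_mul]
      rw [show ((c:ℝ)⁻¹)^(i:ℕ) = (c⁻¹)^((j:ℕ))*c⁻¹ from by rw [h2, pow_succ]]
      have hcc : (c⁻¹)^(j:ℕ) * c^(j:ℕ) = 1 := by rw [← mul_pow, inv_mul_cancel₀ hc, one_pow]
      have hc' : c⁻¹ * c = 1 := inv_mul_cancel₀ hc
      linear_combination (g ⟨(j:ℕ), by have := i.isLt; omega⟩ * (c⁻¹ * c)) * hcc + g ⟨(j:ℕ), by have := i.isLt; omega⟩ * hc'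
    · have h1' : (i : ℕ) ≠ (j : ℕ) := fun h => h1 (Fin.ext h)
      rw [igoA_apply_zero _ _ h1' h2, igoA_apply_zero _ _ h1' h2]
      ring

lemma igo_series (a : Fin m → ℝ) (g : Fin (m-1) → ℝ)
    (ha : ∀ i, 0 < a i) (ξ : ℝ) (hξ : 0 < ξ) :
    ∃ W : Matrix (Fin m) (Fin m) ℝ,
      (exp ((-ξ) • igoA m a g) - 1) * W = 1 ∧
      HasSum (fun n : ℕ => exp ((((n:ℝ)+1) * ξ) • igoA m a g)) W := by
  letI : SeminormedRing (Matrix (Fin m) (Fin m) ℝ) := Matrix.linftyOpSemiNormedRing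
  letI : NormedRing (Matrix (Fin m) (Fin m) ℝ) := Matrix.linftyOpNormedRing
  letI : NormedAlgebra ℝ (Matrix (Fin m) (Fin m) ℝ) := Matrix.linftyOpNormedAlgebra
  -- find c ≠ 0 such that the conjugated exponential has norm < 1
  have hcont : Continuous (fun c : ℝ => exp (ξ • igoA m a (c • g))) := by
    have h1 : Continuous (fun c : ℝ => ξ • igoA m a (c • g)) := by
      simp only [igoA_split a g]
      exact (continuous_const.add (continuous_id.smul continuous_const)).const_smul ξ
    letI : NormedAlgebra ℚ (Matrix (Fin m) (Fin m) ℝ) := Matrix.linftyOpNormedAlgebra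
    exact exp_continuous.comp h1
  have hval : ‖exp (ξ • igoA m a ((0:ℝ) • g))‖ < 1 := by
    rw [zero_smul, igoA_zero_g, ← Matrix.diagonal_smul, Matrix.exp_diagonal,
      Matrix.linfty_opNorm_diagonal]
    rw [pi_norm_lt_iff one_pos]
    intro i
    rw [Pi.coe_exp]
    simp only [Pi.smul_apply, smul_eq_mul]
    rw [← Real.exp_eq_exp_ℝ, Real.norm_eq_abs, Real.abs_exp]
    apply Real.exp_lt_one_iff.2
    have := ha i
    nlinarith
  obtain ⟨c, hc1, hc0⟩ : ∃ c : ℝ, ‖exp (ξ • igoA m a (c • g))‖ < 1 ∧ c ≠ 0 := by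
    have hev : ∀ᶠ c in nhds (0:ℝ), ‖exp (ξ • igoA m a (c • g))‖ < 1 :=
      Filter.Tendsto.eventually_lt_const hval (hcont.norm.tendsto 0)
    have hne : ∀ᶠ c in nhdsWithin (0:ℝ) {(0:ℝ)}ᶜ, c ∈ ({(0:ℝ)}ᶜ : Set ℝ) :=
      eventually_mem_nhdsWithin
    obtain ⟨c, h1, h2⟩ := ((hev.filter_mono nhdsWithin_le_nhds).and hne).exists
    exact ⟨c, h1, Set.mem_compl_singleton_iff.1 h2⟩
  set Ac := igoA m a (c • g) with hAc
  set S := Matrix.diagonal (fun i : Fin m => (c⁻¹)^(i : ℕ)) with hSdef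
  set Sinv := Matrix.diagonal (fun i : Fin m => c^(i : ℕ)) with hSinvdef
  have hSS : S * Sinv = 1 := by
    rw [hSdef, hSinvdef, Matrix.diagonal_mul_diagonal]
    rw [show (fun i : Fin m => (c⁻¹)^(i:ℕ) * c^(i:ℕ)) = fun _ => (1:ℝ) from
      funext fun i => by rw [← mul_pow, inv_mul_cancel₀ hc0, one_pow]]
    exact Matrix.diagonal_one
  have hSS' : Sinv * S = 1 := by
    rw [hSdef, hSinvdef, Matrix.diagonal_mul_diagonal]
    rw [show (fun i : Fin m => c^(i:ℕ) * (c⁻¹)^(i:ℕ)) = fun _ => (1:ℝ) from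
      funext fun i => by rw [← mul_pow, mul_inv_cancel₀ hc0, one_pow]]
    exact Matrix.diagonal_one
  have hconj : igoA m a g = S * Ac * Sinv := (igoA_conj a g c hc0).symm
  set M := exp (ξ • Ac) with hMdef
  set M' := exp ((-ξ) • Ac) with hM'def
  have hM'M : M' * M = 1 := by
    have h := Matrix.exp_add_of_commute _ _ (((Commute.refl Ac).smul_left (-ξ)).smul_right ξ)
    rw [← add_smul, neg_add_cancel, zero_smul, exp_zero] at h
    exact h.symm
  let U : (Matrix (Fin m) (Fin m) ℝ)ˣ := ⟨S, Sinv, hSS, hSS'⟩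
  have hEconj : ∀ r : ℝ, exp (r • igoA m a g) = S * exp (r • Ac) * Sinv := by
    intro r
    rw [hconj]
    rw [show r • (S * Ac * Sinv) = S * (r • Ac) * Sinv from by
      rw [Matrix.mul_smul, Matrix.smul_mul]]
    exact Matrix.exp_units_conj U (r • Ac)
  have hgeoms : Summable (fun n : ℕ => M ^ n) := summable_geometric_of_norm_lt_one hc1
  set T := ∑' n : ℕ, M ^ n with hTdef
  have hgeomHasSum : HasSum (fun n : ℕ => M ^ n) T := hgeoms.hasSum
  have hgeom1 : (1 - M) * T = 1 := mul_neg_geom_series M hc1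
  refine ⟨S * (T * M) * Sinv, ?_, ?_⟩
  · rw [hEconj (-ξ)]
    have hM'sub : M' - 1 = M' * (1 - M) := by rw [mul_sub, mul_one, hM'M]
    have key : (S * M' * Sinv - 1) * (S * (T * M) * Sinv)
        = S * ((M' - 1) * (T * M)) * Sinv := by
      rw [sub_mul, one_mul, sub_mul]
      congr 1
      simp only [← mul_assoc]
      rw [show S * M' * Sinv * S * T * M * Sinv = S * M' * (Sinv * S) * T * M * Sinv from by
        simp only [mul_assoc]]
      rw [hSS', mul_one]
      noncomm_ring
    rw [key, hM'sub]
    calc S * ((M' * (1 - M)) * (T * M)) * Sinv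
        = S * (M' * ((1 - M) * T * M)) * Sinv := by simp only [mul_assoc]
      _ = 1 := by rw [hgeom1, one_mul, hM'M, mul_one, hSS]
  · -- HasSum via the continuous linear map X ↦ S * (X * M) * Sinv
    let J : Matrix (Fin m) (Fin m) ℝ →ₗ[ℝ] Matrix (Fin m) (Fin m) ℝ :=
      { toFun := fun X => S * (X * M) * Sinv
        map_add' := fun x y => by
          simp only [Matrix.add_mul, Matrix.mul_add]
        map_smul' := fun r x => by
          simp only [RingHom.id_apply, Matrix.smul_mul, Matrix.mul_smul] }
    have hJsum : HasSum (fun n : ℕ => J (M ^ n)) (J T) :=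
      hgeomHasSum.mapL (LinearMap.toContinuousLinearMap J)
    have hterm : ∀ n : ℕ, J (M ^ n) = exp ((((n:ℝ)+1) * ξ) • igoA m a g) := by
      intro n
      show S * (M ^ n * M) * Sinv = _
      rw [hEconj (((n:ℝ)+1) * ξ)]
      congr 1
      congr 1
      rw [show (((n:ℝ)+1) * ξ) • Ac = ((n+1 : ℕ) : ℝ) • (ξ • Ac) from by
        rw [smul_smul]; push_cast; ring_nf]
      rw [Nat.cast_smul_eq_nsmul, Matrix.exp_nsmul, pow_succ]
    have : (fun n : ℕ => J (M ^ n)) = fun n : ℕ => exp ((((n:ℝ)+1) * ξ) • igoA m a g) :=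
      funext hterm
    rw [this] at hJsum
    exact hJsum

noncomputable def igoPhi (hm : 0 < m) (a : Fin m → ℝ) (g : Fin (m-1) → ℝ) (ξ : ℝ) : ℝ :=
  ((exp ((-ξ) • igoA m a g) - 1)⁻¹ : Matrix (Fin m) (Fin m) ℝ) ⟨m-1, by omega⟩ ⟨0, hm⟩

lemma igo_entry (hm : 0 < m) (M : Matrix (Fin m) (Fin m) ℝ) :
    igoC m ⬝ᵥ M.mulVec (igoB m) = M ⟨m-1, by omega⟩ ⟨0, hm⟩ := by
  have hmv : ∀ i, M.mulVec (igoB m) i = M i ⟨0, hm⟩ := by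
    intro i
    rw [Matrix.mulVec, dotProduct]
    rw [Finset.sum_eq_single (⟨0, hm⟩ : Fin m)]
    · simp [igoB]
    · intro b _ hb
      have : (b : ℕ) ≠ 0 := fun h => hb (Fin.ext h)
      simp [igoB, this]
    · exact fun h => absurd (Finset.mem_univ _) h
  rw [dotProduct]
  rw [Finset.sum_eq_single (⟨m-1, by omega⟩ : Fin m)]
  · rw [hmv]; simp [igoC]
  · intro b _ hb
    have : (b : ℕ) ≠ m-1 := fun h => hb (Fin.ext h)
    simp [igoC, this]
  · exact fun h => absurd (Finset.mem_univ _) h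

lemma igoR_eq (hm : 0 < m) (a : Fin m → ℝ) (g : Fin (m-1) → ℝ) (Φ F : ℝ → ℝ) (y : ℝ) :
    igoR m a g Φ F y = F y * igoPhi hm a g (Φ y) := by
  rw [igoR, igo_entry hm, igoPhi]

lemma igoPhi_hasSum (hm : 0 < m) (a : Fin m → ℝ) (g : Fin (m-1) → ℝ)
    (ha : ∀ i, 0 < a i) (ξ : ℝ) (hξ : 0 < ξ) :
    HasSum (fun n : ℕ => igoU a g ⟨m-1, by omega⟩ (((n:ℝ)+1) * ξ)) (igoPhi hm a g ξ) := by
  obtain ⟨W, hNW, hsum⟩ := igo_series a g ha ξ hξ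
  have hinv : ((exp ((-ξ) • igoA m a g) - 1)⁻¹ : Matrix (Fin m) (Fin m) ℝ) = W :=
    Matrix.inv_eq_right_inv hNW
  have L : Matrix (Fin m) (Fin m) ℝ →+ ℝ :=
    { toFun := fun X => X ⟨m-1, by omega⟩ ⟨0, hm⟩,
      map_zero' := rfl, map_add' := fun _ _ => rfl }
  have hL : Continuous fun X : Matrix (Fin m) (Fin m) ℝ => X ⟨m-1, by omega⟩ ⟨0, hm⟩ :=
    (continuous_apply _).comp (continuous_apply _)
  have := hsum.map
    ({ toFun := fun X : Matrix (Fin m) (Fin m) ℝ => X ⟨m-1, by omega⟩ ⟨0, hm⟩,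
       map_zero' := rfl, map_add' := fun _ _ => rfl } : Matrix (Fin m) (Fin m) ℝ →+ ℝ) hL
  rw [igoPhi, hinv]
  exact this

lemma igoU_anti (hm : 0 < m) (a : Fin m → ℝ) (g : Fin (m-1) → ℝ)
    (ha : ∀ i, 0 < a i) (hg : ∀ i, 0 < g i) (α : ℝ) (hα0 : 0 < α) (hαa : ∀ i, α ≤ a i)
    {s t : ℝ} (hs : 0 < s) (hτ : ((m:ℝ)-1)/α ≤ s) (hst : s ≤ t) :
    igoU a g ⟨m-1, by omega⟩ t ≤ igoU a g ⟨m-1, by omega⟩ s := by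
  obtain ⟨P1, P2, P3⟩ := igoU_main a g ha hg α hαa (m-1) (by omega)
  have ht0 : 0 < t := lt_of_lt_of_le hs hst
  have h3 := P3 s t hs.le hst
  set f := igoU a g (⟨m-1, by omega⟩ : Fin m) with hf
  -- t^(m-1) ≤ s^(m-1) * exp (α*(t-s))
  have hcast : ((m-1 : ℕ) : ℝ) = (m:ℝ) - 1 := by
    have : 1 ≤ m := hm
    push_cast [this]
    ring
  have hm1s : ((m-1:ℕ) : ℝ) ≤ α * s := by
    rw [hcast]
    rw [div_le_iff₀ hα0] at hτ
    linarith
  have hpow : t^(m-1) ≤ s^(m-1) * Real.exp (α*(t-s)) := by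
    have h1 : t/s ≤ Real.exp ((t-s)/s) := by
      have := Real.add_one_le_exp ((t-s)/s)
      have heq : (t-s)/s + 1 = t/s := by rw [sub_div, div_self hs.ne']; ring
      linarith [heq ▸ this]
    have h2 : (t/s)^(m-1) ≤ Real.exp ((t-s)/s)^(m-1) :=
      pow_le_pow_left₀ (by positivity) h1 _
    have h3' : Real.exp ((t-s)/s)^(m-1) = Real.exp (((m-1:ℕ):ℝ) * ((t-s)/s)) := by
      rw [← Real.exp_nat_mul]
    have h4 : ((m-1:ℕ):ℝ) * ((t-s)/s) ≤ α*(t-s) := by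
      have heq : ((m-1:ℕ):ℝ) * ((t-s)/s) = ((m-1:ℕ):ℝ)/s * (t-s) := by ring
      rw [heq, mul_comm α (t-s), mul_comm (((m-1:ℕ):ℝ)/s) (t-s)]
      apply mul_le_mul_of_nonneg_left _ (by linarith)
      rw [div_le_iff₀ hs]
      linarith [hm1s]
    calc t^(m-1) = (s * (t/s))^(m-1) := by rw [mul_div_cancel₀ _ (ne_of_gt hs)]
      _ = s^(m-1) * (t/s)^(m-1) := by rw [mul_pow]
      _ ≤ s^(m-1) * Real.exp ((t-s)/s)^(m-1) := by
          exact mul_le_mul_of_nonneg_left h2 (by positivity)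
      _ = s^(m-1) * Real.exp (((m-1:ℕ):ℝ) * ((t-s)/s)) := by rw [h3']
      _ ≤ s^(m-1) * Real.exp (α*(t-s)) := by
          exact mul_le_mul_of_nonneg_left (Real.exp_le_exp.2 h4) (by positivity)
  -- combine
  have hfs : 0 ≤ f s := P1 s hs.le
  have hchain : f t * Real.exp (α*t) * s^(m-1) ≤ f s * Real.exp (α*t) * s^(m-1) := by
    calc f t * Real.exp (α*t) * s^(m-1) ≤ f s * Real.exp (α*s) * t^(m-1) := h3
      _ ≤ f s * Real.exp (α*s) * (s^(m-1) * Real.exp (α*(t-s))) := by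
          exact mul_le_mul_of_nonneg_left hpow (by positivity)
      _ = f s * Real.exp (α*t) * s^(m-1) := by
          have hE : Real.exp (α*s) * Real.exp (α*(t-s)) = Real.exp (α*t) := by
            rw [← Real.exp_add]; ring_nf
          linear_combination (f s * s^(m-1)) * hE
  have hpos : 0 < Real.exp (α*t) * s^(m-1) :=
    mul_pos (Real.exp_pos _) (pow_pos hs _)
  have h5 : f t * (Real.exp (α*t) * s^(m-1)) ≤ f s * (Real.exp (α*t) * s^(m-1)) := by
    rw [← mul_assoc, ← mul_assoc]; exact hchain
  exact (mul_le_mul_iff_of_pos_right hpos).1 h5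

lemma igoPhi_pos (hm : 0 < m) (a : Fin m → ℝ) (g : Fin (m-1) → ℝ)
    (ha : ∀ i, 0 < a i) (hg : ∀ i, 0 < g i) (α : ℝ) (hαa : ∀ i, α ≤ a i)
    (ξ : ℝ) (hξ : 0 < ξ) : 0 < igoPhi hm a g ξ := by
  obtain ⟨P1, P2, _⟩ := igoU_main a g ha hg α hαa (m-1) (by omega)
  have h := igoPhi_hasSum hm a g ha ξ hξ
  calc 0 < igoU a g ⟨m-1, by omega⟩ ((((0:ℕ):ℝ)+1) * ξ) := by
        apply P2; norm_num [hξ]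
    _ ≤ igoPhi hm a g ξ := by
        apply le_hasSum h 0
        intro n _
        apply P1
        positivity
  
lemma igoPhi_anti (hm : 0 < m) (a : Fin m → ℝ) (g : Fin (m-1) → ℝ)
    (ha : ∀ i, 0 < a i) (hg : ∀ i, 0 < g i) (α : ℝ) (hα0 : 0 < α) (hαa : ∀ i, α ≤ a i)
    {ξ₁ ξ₂ : ℝ} (h1 : 0 < ξ₁) (hτ : ((m:ℝ)-1)/α ≤ ξ₁) (h12 : ξ₁ ≤ ξ₂) :
    igoPhi hm a g ξ₂ ≤ igoPhi hm a g ξ₁ := by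
  apply hasSum_le _ (igoPhi_hasSum hm a g ha ξ₂ (lt_of_lt_of_le h1 h12))
    (igoPhi_hasSum hm a g ha ξ₁ h1)
  intro n
  have hn1 : (1:ℝ) ≤ (n:ℝ) + 1 := by
    have : (0:ℝ) ≤ (n:ℝ) := Nat.cast_nonneg n
    linarith
  apply igoU_anti hm a g ha hg α hα0 hαa
  · positivity
  · calc ((m:ℝ)-1)/α ≤ ξ₁ := hτ
      _ = 1 * ξ₁ := (one_mul _).symm
      _ ≤ ((n:ℝ)+1) * ξ₁ := by
          apply mul_le_mul_of_nonneg_right hn1 h1.le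
  · exact mul_le_mul_of_nonneg_left h12 (by positivity)

lemma igoPhi_continuousOn (hm : 0 < m) (a : Fin m → ℝ) (g : Fin (m-1) → ℝ)
    (ha : ∀ i, 0 < a i) : ContinuousOn (igoPhi hm a g) (Set.Ioi 0) := by
  have hNcont : Continuous fun ξ : ℝ => (exp ((-ξ) • igoA m a g) - 1 :
      Matrix (Fin m) (Fin m) ℝ) := by
    letI : SeminormedRing (Matrix (Fin m) (Fin m) ℝ) := Matrix.linftyOpSemiNormedRing
    letI : NormedRing (Matrix (Fin m) (Fin m) ℝ) := Matrix.linftyOpNormedRing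
    letI : NormedAlgebra ℝ (Matrix (Fin m) (Fin m) ℝ) := Matrix.linftyOpNormedAlgebra
    apply Continuous.sub _ continuous_const
    letI : NormedAlgebra ℚ (Matrix (Fin m) (Fin m) ℝ) := Matrix.linftyOpNormedAlgebra
    exact exp_continuous.comp (continuous_neg.smul continuous_const)
  have hdet : ∀ ξ ∈ Set.Ioi (0:ℝ),
      (exp ((-ξ) • igoA m a g) - 1 : Matrix (Fin m) (Fin m) ℝ).det ≠ 0 := by
    intro ξ hξ
    obtain ⟨W, hNW, _⟩ := igo_series a g ha ξ hξ
    have : (exp ((-ξ) • igoA m a g) - 1 : Matrix (Fin m) (Fin m) ℝ).det * W.det = 1 := by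
      rw [← Matrix.det_mul, hNW, Matrix.det_one]
    intro h0
    rw [h0, zero_mul] at this
    exact zero_ne_one this
  have heq : ∀ ξ : ℝ, igoPhi hm a g ξ =
      ((exp ((-ξ) • igoA m a g) - 1 : Matrix (Fin m) (Fin m) ℝ).det)⁻¹ *
        (exp ((-ξ) • igoA m a g) - 1 : Matrix (Fin m) (Fin m) ℝ).adjugate
          ⟨m-1, by omega⟩ ⟨0, hm⟩ := by
    intro ξ
    rw [igoPhi, Matrix.inv_def, Matrix.smul_apply, Ring.inverse_eq_inv', smul_eq_mul]
  refine ContinuousOn.congr ?_ (fun ξ _ => heq ξ)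
  apply ContinuousOn.mul
  · exact ContinuousOn.inv₀ (hNcont.matrix_det.continuousOn) hdet
  · exact (hNcont.matrix_adjugate.matrix_elem _ _).continuousOn

theorem stmt8 (m : ℕ) (hm1 : 1 ≤ m)
    (a : Fin m → ℝ) (g : Fin (m - 1) → ℝ)
    (ha : ∀ i, 0 < a i) (hg : ∀ i, 0 < g i)
    (Φ F : ℝ → ℝ) (hΦcont : ContinuousOn Φ (Set.Ici 0)) (hFcont : ContinuousOn F (Set.Ici 0))
    (hFmono : AntitoneOn F (Set.Ici 0)) (hΦmono : MonotoneOn Φ (Set.Ici 0))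
    (Φ₁ Φ₂ F₁ F₂ : ℝ) (hΦ₁ : 0 < Φ₁) (hΦ₂ : 0 < Φ₂) (hF₁ : 0 < F₁) (hF₂ : 0 < F₂)
    (hΦ : ∀ y ≥ (0 : ℝ), Φ₁ ≤ Φ y ∧ Φ y ≤ Φ₂)
    (hF : ∀ y ≥ (0 : ℝ), F₁ ≤ F y ∧ F y ≤ F₂)
    (hsparse : ((m : ℝ) - 1) / (Finset.univ.inf' ⟨⟨0, hm1⟩, Finset.mem_univ _⟩ a) ≤ Φ₁) :
    AntitoneOn (igoR m a g Φ F) (Set.Ici 0) ∧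
    (∃ y : ℝ, 0 < y ∧ y = igoR m a g Φ F y ∧
      ∀ z ≥ (0 : ℝ), z = igoR m a g Φ F z → z = y) := by
  have hm : 0 < m := hm1
  set α := Finset.univ.inf' ⟨⟨0, hm1⟩, Finset.mem_univ _⟩ a with hαdef
  have hαa : ∀ i, α ≤ a i := fun i => Finset.inf'_le a (Finset.mem_univ i)
  have hα0 : 0 < α := by
    obtain ⟨i, _, hi⟩ := Finset.exists_mem_eq_inf' ⟨⟨0, hm1⟩, Finset.mem_univ _⟩ a
    rw [hαdef, hi]
    exact ha i
  set R := igoR m a g Φ F with hRdef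
  set φ := igoPhi hm a g with hφdef
  have hReq : ∀ y : ℝ, R y = F y * φ (Φ y) := fun y => igoR_eq hm a g Φ F y
  have hΦpos : ∀ y : ℝ, 0 ≤ y → 0 < Φ y := fun y hy => lt_of_lt_of_le hΦ₁ (hΦ y hy).1
  have hφpos : ∀ y : ℝ, 0 ≤ y → 0 < φ (Φ y) := fun y hy =>
    igoPhi_pos hm a g ha hg α hαa _ (hΦpos y hy)
  have hFpos : ∀ y : ℝ, 0 ≤ y → 0 < F y := fun y hy => lt_of_lt_of_le hF₁ (hF y hy).1
  have hRpos : ∀ y : ℝ, 0 ≤ y → 0 < R y := by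
    intro y hy
    rw [hReq y]
    exact mul_pos (hFpos y hy) (hφpos y hy)
  have hanti : AntitoneOn R (Set.Ici 0) := by
    intro y₁ h1 y₂ h2 h12
    simp only [Set.mem_Ici] at h1 h2
    have hΦ12 : Φ y₁ ≤ Φ y₂ := hΦmono h1 h2 h12
    rw [hReq y₁, hReq y₂]
    calc F y₂ * φ (Φ y₂) ≤ F y₁ * φ (Φ y₂) :=
          mul_le_mul_of_nonneg_right (hFmono h1 h2 h12) (hφpos y₂ h2).le
      _ ≤ F y₁ * φ (Φ y₁) := by
          apply mul_le_mul_of_nonneg_left _ (hFpos y₁ h1).le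
          exact igoPhi_anti hm a g ha hg α hα0 hαa (hΦpos y₁ h1)
            (le_trans hsparse (hΦ y₁ h1).1) hΦ12
  refine ⟨hanti, ?_⟩
  -- continuity of R on Ici 0
  have hRcont : ContinuousOn R (Set.Ici 0) := by
    have : ContinuousOn (fun y => F y * φ (Φ y)) (Set.Ici 0) := by
      apply hFcont.mul
      apply ContinuousOn.comp (igoPhi_continuousOn hm a g ha) hΦcont
      intro y hy
      exact hΦpos y hy
    exact ContinuousOn.congr this (fun y _ => hReq y)
  set Y := R 0 with hYdef
  have hY0 : 0 < Y := hRpos 0 le_rfl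
  have hGcont : ContinuousOn (fun y => y - R y) (Set.Icc 0 Y) :=
    (continuousOn_id.sub (hRcont.mono (Set.Icc_subset_Ici_self)))
  have hG0 : (fun y => y - R y) 0 = -Y := by simp [hYdef]
  have hGY : 0 ≤ (fun y => y - R y) Y := by
    have : R Y ≤ R 0 := hanti (Set.mem_Ici.2 le_rfl) (Set.mem_Ici.2 hY0.le) hY0.le
    simp only []
    linarith
  have hIVT := intermediate_value_Icc hY0.le hGcont
  have h0mem : (0:ℝ) ∈ Set.Icc ((fun y => y - R y) 0) ((fun y => y - R y) Y) := by
    rw [hG0]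
    exact ⟨by linarith, hGY⟩
  obtain ⟨y, hyIcc, hGy⟩ := hIVT h0mem
  have hy0 : 0 ≤ y := hyIcc.1
  have hyR : y = R y := by
    have : y - R y = 0 := hGy
    linarith
  refine ⟨y, ?_, hyR, ?_⟩
  · rw [hyR]; exact hRpos y hy0
  · intro z hz0 hzR
    by_contra hne
    rcases lt_or_gt_of_ne hne with hlt | hgt
    · have : R y ≤ R z := hanti (Set.mem_Ici.2 hz0) (Set.mem_Ici.2 hy0) hlt.le
      rw [← hyR, ← hzR] at this
      linarith
    · have : R z ≤ R y := hanti (Set.mem_Ici.2 hy0) (Set.mem_Ici.2 hz0) hgt.le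
      rw [← hyR, ← hzR] at this
      linarith
end
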